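/- arXiv:1807.11465 — 7 statements merged into one kernel-verified Lean document; each statement's English description precedes it below -/
import Mathlib

section
/- Let Σ = (Γ, σ) be a signed graph whose underlying graph Γ is a circle (cycle), and let a be a nonzero signed color. Then Σ admits a proper edge coloring using only colors from {+a, −a} if and only if Σ is positive (the product of its edge signs is +1); moreover, when Σ is positive it has exactly two such colorings. -/
open SimpleGraph

/-- The signed color set `M_n`: for `n = 2k+1` it is `{0, ±1, …, ±k}`,
and for `n = 2k` it is `{±1, …, ±k}`. -/
def Mset (n : ℕ) : Set ℤ :=
  {a : ℤ | 2 * a.natAbs ≤ n ∧ (a = 0 → Odd n)}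

/-- The incidences of a simple graph: pairs `(v, e)` with `e` an edge and `v ∈ e`. -/
def Inc {V : Type*} (G : SimpleGraph V) : Type _ :=
  {p : V × Sym2 V // p.2 ∈ G.edgeSet ∧ p.1 ∈ p.2}

/-- An edge coloring of the signed graph `(G, σ)` using colors from the set `S`:
an assignment of colors to incidences with `γ(v,e) = -σ(e)·γ(w,e)` for each
edge `e : vw`. -/
def IsEdgeColoringWith {V : Type*} (G : SimpleGraph V) (σ : Sym2 V → ℤ) (S : Set ℤ)
    (γ : Inc G → ℤ) : Prop :=
  (∀ i, γ i ∈ S) ∧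
  ∀ ⦃v w : V⦄ (h : G.Adj v w),
    γ ⟨(v, s(v, w)), G.mem_edgeSet.mpr h, Sym2.mem_mk_left v w⟩ =
      -σ s(v, w) * γ ⟨(w, s(v, w)), G.mem_edgeSet.mpr h, Sym2.mem_mk_right v w⟩

/-- Properness: distinct edges incident to a common vertex receive distinct colors
at that vertex. -/
def IsProperInc {V : Type*} (G : SimpleGraph V) (γ : Inc G → ℤ) : Prop :=
  ∀ i j : Inc G, i.1.1 = j.1.1 → i.1.2 ≠ j.1.2 → γ i ≠ γ j

open Function

lemma abstract_unique' {X : Type*}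
    (A B : X → X) (x0 : X)
    (hclos : ∀ U : Set X, x0 ∈ U → (∀ i ∈ U, A i ∈ U) → (∀ i ∈ U, B i ∈ U) → ∀ i, i ∈ U)
    (t : X → ℤ)
    (γ γ' : X → ℤ)
    (hAγ : ∀ i, γ (A i) = -t i * γ i) (hBγ : ∀ i, γ (B i) = -γ i)
    (hAγ' : ∀ i, γ' (A i) = -t i * γ' i) (hBγ' : ∀ i, γ' (B i) = -γ' i)
    (h0 : γ x0 = γ' x0) : γ = γ' := by
  funext i
  refine hclos {i | γ i = γ' i} h0 ?_ ?_ i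
  · intro j hj
    simp only [Set.mem_setOf_eq] at *
    rw [hAγ, hAγ', hj]
  · intro j hj
    simp only [Set.mem_setOf_eq] at *
    rw [hBγ, hBγ', hj]

lemma abstract_forward' {X : Type*} [Fintype X] [DecidableEq X]
    (A B : X → X) (hAA : ∀ i, A (A i) = i) (hBB : ∀ i, B (B i) = i)
    (t : X → ℤ) (a : ℤ) (ha : a ≠ 0)
    (s s' : Finset X)
    (hscov : ∀ i, i ∈ s ∨ A i ∈ s) (hsdis : ∀ i ∈ s, A i ∉ s)
    (hs'cov : ∀ i, i ∈ s' ∨ B i ∈ s') (hs'dis : ∀ i ∈ s', B i ∉ s')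
    (γ : X → ℤ) (hval : ∀ i, γ i = a ∨ γ i = -a)
    (hAγ : ∀ i, γ (A i) = -t i * γ i) (hBγ : ∀ i, γ (B i) = -γ i) :
    ∏ i ∈ s, t i = 1 := by
  have hsq : ∀ i, γ i * γ i = a * a := by
    intro i; rcases hval i with h | h <;> rw [h] <;> ring
  have pairing : ∀ (C : X → X), (∀ i, C (C i) = i) →
      ∀ (u : Finset X), (∀ i, i ∈ u ∨ C i ∈ u) → (∀ i ∈ u, C i ∉ u) →
      (∏ i : X, γ i) = ∏ i ∈ u, (γ i * γ (C i)) ∧ Fintype.card X = 2 * u.card := by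
    intro C hCC u hucov hudis
    have hCinj : Function.Injective C := Function.Involutive.injective hCC
    have hdisj : Disjoint u (u.image C) := by
      rw [Finset.disjoint_left]
      intro x hx hx'
      obtain ⟨y, hy, rfl⟩ := Finset.mem_image.mp hx'
      exact hudis y hy hx
    have huniv : Finset.univ = u ∪ u.image C := by
      symm
      apply Finset.eq_univ_of_forall
      intro x
      rcases hucov x with h | h
      · exact Finset.mem_union_left _ h
      · exact Finset.mem_union_right _ (Finset.mem_image.mpr ⟨C x, h, hCC x⟩)
    constructor
    · rw [huniv, Finset.prod_union hdisj, Finset.prod_image (fun x _ y _ h => hCinj h),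
        ← Finset.prod_mul_distrib]
    · rw [← Finset.card_univ, huniv, Finset.card_union_of_disjoint hdisj,
        Finset.card_image_of_injective _ hCinj, two_mul]
  obtain ⟨hp1, hc1⟩ := pairing A hAA s hscov hsdis
  obtain ⟨hp2, hc2⟩ := pairing B hBB s' hs'cov hs'dis
  have key : ∀ (C : X → X) (u : Finset X) (c : X → ℤ),
      (∀ i ∈ u, γ i * γ (C i) = c i * (-(a*a))) →
      (∏ i ∈ u, γ i * γ (C i)) = (∏ i ∈ u, c i) * (-(a*a)) ^ u.card := by
    intro C u c hc
    rw [Finset.prod_congr rfl hc, Finset.prod_mul_distrib, Finset.prod_const]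
  have e1 := key A s t (fun i _ => by rw [hAγ i]; linear_combination (-(t i)) * hsq i)
  have e2 := key B s' (fun _ => 1) (fun i _ => by rw [hBγ i]; linear_combination (-1 : ℤ) * hsq i)
  rw [Finset.prod_const_one, one_mul] at e2
  have hcard : s.card = s'.card := by omega
  have : (∏ i ∈ s, t i) * (-(a*a)) ^ s.card = (-(a*a)) ^ s.card := by
    rw [← e1, ← hp1, hp2, e2, hcard]
  have hne : (-(a*a)) ^ s.card ≠ 0 := pow_ne_zero _ (by simpa using mul_ne_zero ha ha)
  exact mul_right_cancel₀ hne (by rw [this, one_mul])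

lemma abstract_exists' {X : Type*} [Finite X]
    (A B : X → X) (hAA : ∀ i, A (A i) = i) (hBB : ∀ i, B (B i) = i)
    (hAne : ∀ i, A i ≠ i) (hBne : ∀ i, B i ≠ i)
    (x0 : X)
    (hclos : ∀ U : Set X, x0 ∈ U → (∀ i ∈ U, A i ∈ U) → (∀ i ∈ U, B i ∈ U) → ∀ i, i ∈ U)
    (t : X → ℤ) (ht1 : ∀ i, t i = 1 ∨ t i = -1) (htA : ∀ i, t (A i) = t i)
    (hprod : ∀ s : Finset X, (∀ i, i ∈ s ∨ A i ∈ s) → (∀ i ∈ s, A i ∉ s) →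
      ∏ i ∈ s, t i = 1)
    (a : ℤ) :
    ∃ ε : X → ℤ, (∀ i, ε i = a ∨ ε i = -a) ∧ (∀ i, ε (A i) = -t i * ε i) ∧
      (∀ i, ε (B i) = -ε i) := by
  classical
  set f : X → X := B ∘ A with hf
  have hfinj : Function.Injective f :=
    (Function.Involutive.injective hBB).comp (Function.Involutive.injective hAA)
  have hper : x0 ∈ periodicPts f := by
    obtain ⟨m, n, hmn, h⟩ := Finite.exists_ne_map_eq_of_infinite (fun k : ℕ => f^[k] x0)
    rcases Nat.lt_or_ge m n with hlt | hge
    · refine ⟨n - m, by omega, ?_⟩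
      have : f^[m] (f^[n-m] x0) = f^[m] x0 := by
        rw [← Function.iterate_add_apply, show m + (n - m) = n by omega]; exact h.symm
      exact hfinj.iterate m this
    · have hlt : n < m := by omega
      refine ⟨m - n, by omega, ?_⟩
      have : f^[n] (f^[m-n] x0) = f^[n] x0 := by
        rw [← Function.iterate_add_apply, show n + (m - n) = m by omega]; exact h
      exact hfinj.iterate n this
  set d : ℕ := minimalPeriod f x0 with hdd
  have hd0 : 0 < d := minimalPeriod_pos_of_mem_periodicPts hper
  have hfd : f^[d] x0 = x0 := isPeriodicPt_minimalPeriod f x0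
  have hmod : ∀ n : ℕ, f^[n] x0 = f^[n % d] x0 := fun n =>
    (iterate_mod_minimalPeriod_eq).symm
  have hinj : ∀ k < d, ∀ l < d, f^[k] x0 = f^[l] x0 → k = l := by
    intro k hk l hl h
    exact iterate_injOn_Iio_minimalPeriod hk hl h
  have hshift : ∀ n : ℕ, f^[n + d] x0 = f^[n] x0 := by
    intro n; rw [Function.iterate_add_apply, hfd]
  have hconj : ∀ (k : ℕ) (j : X), f^[k] (A (f^[k] j)) = A j := by
    intro k
    induction k with
    | zero => intro j; simp
    | succ k ih =>
      intro j
      have h1 : f^[k+1] j = f (f^[k] j) := Function.iterate_succ_apply' f k j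
      have h2 : ∀ y : X, f (A (f y)) = A y := by
        intro y
        show B (A (A (B (A y)))) = A y
        rw [hAA, hBB]
      calc f^[k+1] (A (f^[k+1] j)) = f^[k] (f (A (f (f^[k] j)))) := by
            rw [h1, Function.iterate_succ_apply]
        _ = f^[k] (A (f^[k] j)) := by rw [h2]
        _ = A j := ih j
  have hBA : ∀ k : ℕ, B (f^[k+1] x0) = A (f^[k] x0) := by
    intro k
    have h : f^[k+1] x0 = B (A (f^[k] x0)) := Function.iterate_succ_apply' f k x0
    rw [h, hBB]
  -- solvability of 2j ≡ c (mod d) for even c or odd d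
  have hsolv : ∀ c : ℕ, (Even c ∨ Odd d) → ∃ j : ℕ, (2 * j) % d = c % d := by
    intro c hc
    have hodd : ∀ d2 : ℕ, d = 2 * d2 + 1 → ∃ j : ℕ, (2 * j) % d = c % d := by
      intro d2 hd2
      refine ⟨c * (d2 + 1), ?_⟩
      have h : 2 * (c * (d2 + 1)) = c + c * d := by rw [hd2]; ring
      rw [h, Nat.add_mul_mod_self_right]
    rcases hc with ⟨c2, hc2⟩ | hdo
    · rcases Nat.even_or_odd d with hde | hdo
      · refine ⟨(c % d) / 2, ?_⟩
        have h2c : 2 ∣ c % d := by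
          have h := Nat.mod_mod_of_dvd c hde.two_dvd
          omega
        have h : 2 * ((c % d) / 2) = c % d := by omega
        rw [h, Nat.mod_mod_of_dvd _ (dvd_refl d)]
      · rcases hdo with ⟨d2, hd2⟩
        exact hodd d2 (by omega)
    · rcases hdo with ⟨d2, hd2⟩
      exact hodd d2 (by omega)
  -- disjointness of the two half-orbits
  have hdisj : ∀ k l : ℕ, A (f^[k] x0) ≠ f^[l] x0 := by
    intro k l h
    have hm0 : A x0 = f^[k + l] x0 := by
      rw [← hconj k x0, h, ← Function.iterate_add_apply]
    set m := (k + l) % d with hmdef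
    have hmd : m < d := Nat.mod_lt _ hd0
    have hm : A x0 = f^[m] x0 := by rw [hm0, hmod]
    have hform : ∀ j, j < d → A (f^[j] x0) = f^[m + d - j] x0 := by
      intro j hj
      have h1 : f^[j] (A (f^[j] x0)) = f^[m] x0 := by rw [hconj, hm]
      have h2 : f^[j] (f^[m + d - j] x0) = f^[m] x0 := by
        rw [← Function.iterate_add_apply, show j + (m + d - j) = m + d by omega, hshift]
      exact hfinj.iterate j (h1.trans h2.symm)
    have hred : ∀ j0 : ℕ, ∃ j, j < d ∧ (2 * j) % d = (2 * j0) % d := by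
      intro j0
      refine ⟨j0 % d, Nat.mod_lt _ hd0, ?_⟩
      conv_rhs => rw [Nat.mul_mod, ← Nat.mod_mod_of_dvd j0 (dvd_refl d), ← Nat.mul_mod]
    have htwo : ∀ j c : ℕ, j < d → c < d → (2 * j) % d = c → 2 * j = c ∨ 2 * j = c + d := by
      intro j c hj hcd hjc
      rcases Nat.lt_or_ge (2*j) d with hc | hc
      · left; rw [← hjc, Nat.mod_eq_of_lt hc]
      · right
        have hlt : 2*j - d < d := by omega
        have heq : 2 * j = (2*j - d) + 1 * d := by omega
        have h' : (2*j) % d = 2*j - d := by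
          calc (2*j) % d = ((2*j - d) + 1 * d) % d := by rw [← heq]
            _ = (2*j - d) % d := Nat.add_mul_mod_self_right _ _ _
            _ = 2*j - d := Nat.mod_eq_of_lt hlt
        omega
    have hAcase : (Even m ∨ Odd d) → False := by
      intro hev
      obtain ⟨j0, hj0⟩ := hsolv m hev
      obtain ⟨j, hjd, hj⟩ := hred j0
      have hj' : 2 * j % d = m := by rw [hj, hj0]; exact Nat.mod_eq_of_lt hmd
      have h2j := htwo j m hjd hmd hj'
      have hfix : A (f^[j] x0) = f^[j] x0 := by
        rw [hform j hjd]
        rcases h2j with h2 | h2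
        · rw [show m + d - j = j + d by omega, hshift]
        · rw [show m + d - j = j by omega]
      exact hAne _ hfix
    have hBcase : 1 ≤ m → (Even (m-1) ∨ Odd d) → False := by
      intro hm1 hev
      obtain ⟨j0, hj0⟩ := hsolv (m-1) hev
      obtain ⟨j, hjd, hj⟩ := hred j0
      have hj' : 2 * j % d = m - 1 := by
        rw [hj, hj0]; exact Nat.mod_eq_of_lt (by omega)
      have h2j := htwo j (m-1) hjd (by omega) hj'
      have hfix : B (f^[j+1] x0) = f^[j+1] x0 := by
        rw [hBA j, hform j hjd]
        rcases h2j with h2 | h2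
        · rw [show m + d - j = (j+1) + d by omega, hshift]
        · rw [show m + d - j = j + 1 by omega]
      exact hBne _ hfix
    rcases Nat.even_or_odd m with hme | hmo
    · exact hAcase (Or.inl hme)
    · rcases Nat.even_or_odd d with hde | hdo
      · rcases hmo with ⟨mm, hmm⟩
        exact hBcase (by omega) (Or.inl ⟨mm, by omega⟩)
      · exact hAcase (Or.inr hdo)
  -- coverage
  have hcover : ∀ i : X, (∃ k, k < d ∧ i = f^[k] x0) ∨ (∃ k, k < d ∧ i = A (f^[k] x0)) := by
    set U : Set X := {i | (∃ k, k < d ∧ i = f^[k] x0) ∨ (∃ k, k < d ∧ i = A (f^[k] x0))} with hU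
    have h0 : x0 ∈ U := Or.inl ⟨0, hd0, rfl⟩
    have hA : ∀ i ∈ U, A i ∈ U := by
      rintro i (⟨k, hk, rfl⟩ | ⟨k, hk, rfl⟩)
      · exact Or.inr ⟨k, hk, rfl⟩
      · exact Or.inl ⟨k, hk, (hAA _).symm ▸ rfl⟩
    have hB : ∀ i ∈ U, B i ∈ U := by
      rintro i (⟨k, hk, rfl⟩ | ⟨k, hk, rfl⟩)
      · rcases k with _ | k'
        · refine Or.inr ⟨d - 1, by omega, ?_⟩
          rw [← hBA (d-1), show (d-1)+1 = d by omega]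
          simp [hfd]
        · exact Or.inr ⟨k', by omega, hBA k'⟩
      · have hBi : B (A (f^[k] x0)) = f^[k+1] x0 := by
          rw [Function.iterate_succ_apply']; rfl
        rcases Nat.lt_or_ge (k+1) d with hc | hc
        · exact Or.inl ⟨k+1, hc, hBi⟩
        · refine Or.inl ⟨0, hd0, ?_⟩
          rw [hBi, show k+1 = d by omega, hfd]
          rfl
    exact fun i => hclos U h0 hA hB i
  have hrep : ∀ i : X, ∃ k, k < d ∧ (i = f^[k] x0 ∨ i = A (f^[k] x0)) := by
    intro i
    rcases hcover i with ⟨k, hk, h⟩ | ⟨k, hk, h⟩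
    · exact ⟨k, hk, Or.inl h⟩
    · exact ⟨k, hk, Or.inr h⟩
  choose r hr1 hr2 using hrep
  have horbit : ∏ j ∈ Finset.range d, t (f^[j] x0) = 1 := by
    set O : Finset X := (Finset.range d).image (fun k => f^[k] x0) with hO
    have hOcov : ∀ i, i ∈ O ∨ A i ∈ O := by
      intro i
      rcases hcover i with ⟨k, hk, h⟩ | ⟨k, hk, h⟩
      · exact Or.inl (Finset.mem_image.mpr ⟨k, Finset.mem_range.mpr hk, h.symm⟩)
      · refine Or.inr (Finset.mem_image.mpr ⟨k, Finset.mem_range.mpr hk, ?_⟩)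
        rw [h, hAA]
    have hOdis : ∀ i ∈ O, A i ∉ O := by
      intro i hi hAi
      obtain ⟨k, _, rfl⟩ := Finset.mem_image.mp hi
      obtain ⟨l, _, hl⟩ := Finset.mem_image.mp hAi
      exact hdisj _ _ hl.symm
    have h := hprod O hOcov hOdis
    rwa [Finset.prod_image (fun x hx y hy hxy =>
      hinj x (Finset.mem_range.mp hx) y (Finset.mem_range.mp hy) hxy)] at h
  set F : ℕ → ℤ := fun k => a * ∏ j ∈ Finset.range k, t (f^[j] x0) with hF
  have hFsucc : ∀ k, F (k+1) = F k * t (f^[k] x0) := by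
    intro k; rw [hF]; simp only [Finset.prod_range_succ]; ring
  have hFd : F d = a := by rw [hF]; simp only; rw [horbit, mul_one]
  have hF0 : F 0 = a := by simp [hF]
  have hFval : ∀ k, F k = a ∨ F k = -a := by
    intro k
    induction k with
    | zero => exact Or.inl hF0
    | succ k ih =>
      rw [hFsucc]
      rcases ih with h | h <;> rcases ht1 (f^[k] x0) with h' | h' <;> rw [h, h'] <;> omega
  set γ : X → ℤ := fun i => if i = f^[r i] x0 then F (r i) else -t (f^[r i] x0) * F (r i)
    with hγ
  have hγO : ∀ k, k < d → γ (f^[k] x0) = F k := by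
    intro k hk
    have hcond : f^[k] x0 = f^[r (f^[k] x0)] x0 := by
      rcases hr2 (f^[k] x0) with h | h
      · exact h
      · exact absurd h.symm (hdisj _ _)
    have hrk : r (f^[k] x0) = k := hinj _ (hr1 _) _ hk hcond.symm
    rw [hγ]
    simp only
    rw [if_pos hcond, hrk]
  have hγA : ∀ k, k < d → γ (A (f^[k] x0)) = -t (f^[k] x0) * F k := by
    intro k hk
    set i := A (f^[k] x0) with hi
    have hcase : i = A (f^[r i] x0) := by
      rcases hr2 i with h | h
      · exact absurd (hi ▸ h : A (f^[k] x0) = f^[r i] x0) (hdisj _ _)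
      · exact h
    have hrk : r i = k := by
      have h1 := congrArg A hcase
      rw [hi, hAA, hAA] at h1
      exact hinj _ (hr1 _) _ hk (h1.symm)
    have hne : ¬ (i = f^[r i] x0) := hi ▸ hdisj k (r i)
    rw [hγ]
    simp only
    rw [if_neg hne, hrk]
  -- the three properties
  refine ⟨γ, ?_, ?_, ?_⟩
  · intro i
    obtain ⟨k, hk, hcase⟩ : ∃ k, k < d ∧ (i = f^[k] x0 ∨ i = A (f^[k] x0)) :=
      ⟨r i, hr1 i, hr2 i⟩
    rcases hcase with rfl | rfl
    · rw [hγO _ hk]; exact hFval _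
    · rw [hγA _ hk]
      rcases ht1 (f^[k] x0) with h | h <;> rcases hFval k with h' | h' <;>
        rw [h, h'] <;> omega
  · intro i
    obtain ⟨k, hk, hcase⟩ : ∃ k, k < d ∧ (i = f^[k] x0 ∨ i = A (f^[k] x0)) :=
      ⟨r i, hr1 i, hr2 i⟩
    rcases hcase with rfl | rfl
    · rw [hγA _ hk, hγO _ hk]
    · rw [hAA, hγO _ hk, hγA _ hk, htA]
      rcases ht1 (f^[k] x0) with h | h <;> rw [h] <;> ring
  · intro i
    obtain ⟨k, hk, hcase⟩ : ∃ k, k < d ∧ (i = f^[k] x0 ∨ i = A (f^[k] x0)) :=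
      ⟨r i, hr1 i, hr2 i⟩
    rcases hcase with rfl | rfl
    · rcases k with _ | k'
      · have hb : B (f^[0] x0) = A (f^[d-1] x0) := by
          have h1 : f^[0] x0 = f^[(d-1)+1] x0 := by
            rw [show (d-1)+1 = d by omega, hfd]; rfl
          rw [h1, hBA]
        rw [hb, hγA _ (by omega : d - 1 < d), hγO _ hk]
        have hfdd : F ((d-1)+1) = F (d-1) * t (f^[d-1] x0) := hFsucc _
        rw [show (d-1)+1 = d by omega] at hfdd
        rw [hF0, ← hFd, hfdd]
        ring
      · rw [hBA k', hγA _ (by omega : k' < d), hγO _ hk, hFsucc]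
        ring
    · have hb : B (A (f^[k] x0)) = f^[k+1] x0 := by
        rw [Function.iterate_succ_apply']; rfl
      rw [hb, hγA _ hk]
      rcases Nat.lt_or_ge (k+1) d with hc | hc
      · rw [hγO _ hc, hFsucc]; ring
      · have hk1 : k + 1 = d := by omega
        have h1 : f^[k+1] x0 = f^[0] x0 := by rw [hk1, hfd]; rfl
        rw [h1, hγO 0 hd0, hF0, ← hFd, show d = k+1 from hk1.symm, hFsucc]
        ring

/-- A signed circle (a connected `2`-regular signed graph) admits a proper edge coloring
using only the colors `+a, -a` (for `a ≠ 0`) if and only if it is positive (the product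
of its edge signs is `+1`); moreover a positive circle has exactly two such colorings. -/
theorem signed_circle_two_colorable_iff_positive {V : Type*} [Fintype V] [DecidableEq V]
    (G : SimpleGraph V) [DecidableRel G.Adj]
    (hconn : G.Connected) (hreg : ∀ v : V, G.degree v = 2)
    (σ : Sym2 V → ℤ) (hσ : ∀ e ∈ G.edgeSet, σ e = 1 ∨ σ e = -1)
    (a : ℤ) (ha : a ≠ 0) :
    ((∃ γ : Inc G → ℤ, IsEdgeColoringWith G σ {a, -a} γ ∧ IsProperInc G γ) ↔
      ∏ e ∈ G.edgeFinset, σ e = 1) ∧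
    (∏ e ∈ G.edgeFinset, σ e = 1 →
      {γ : Inc G → ℤ | IsEdgeColoringWith G σ {a, -a} γ ∧
        IsProperInc G γ}.ncard = 2) := by
  classical
  haveI hfin : Finite (Inc G) := Subtype.finite
  haveI : Fintype (Inc G) := Fintype.ofFinite _
  have hrepSym : ∀ e ∈ G.edgeSet, ∃ v w, G.Adj v w ∧ e = s(v, w) := by
    intro e
    induction e using Sym2.ind with
    | _ v w => exact fun he => ⟨v, w, G.mem_edgeSet.mp he, rfl⟩
  -- the involution swapping the two endpoints of an edge
  have hAex : ∀ i : Inc G, ∃ j : Inc G, j.1.2 = i.1.2 ∧ j.1.1 ≠ i.1.1 ∧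
      (∀ p : Inc G, p.1.2 = i.1.2 → p = i ∨ p = j) := by
    intro i
    obtain ⟨v, w, hadj, hvw⟩ := hrepSym i.1.2 i.2.1
    have hmemv : v ∈ i.1.2 := by rw [hvw]; exact Sym2.mem_mk_left v w
    have hmemw : w ∈ i.1.2 := by rw [hvw]; exact Sym2.mem_mk_right v w
    have hvtx : i.1.1 = v ∨ i.1.1 = w := by
      have h := i.2.2
      rw [hvw] at h
      exact Sym2.mem_iff.mp h
    have hvtxmem : ∀ p : Inc G, p.1.2 = i.1.2 → p.1.1 = v ∨ p.1.1 = w := by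
      intro p hp
      have h := p.2.2
      rw [hp, hvw] at h
      exact Sym2.mem_iff.mp h
    rcases hvtx with hv | hv
    · refine ⟨⟨(w, i.1.2), i.2.1, hmemw⟩, rfl, by simpa [hv] using hadj.ne', ?_⟩
      intro p hp
      rcases hvtxmem p hp with h | h
      · exact Or.inl (Subtype.ext (Prod.ext (by rw [h, hv]) hp))
      · exact Or.inr (Subtype.ext (Prod.ext h hp))
    · refine ⟨⟨(v, i.1.2), i.2.1, hmemv⟩, rfl, by simpa [hv] using hadj.ne, ?_⟩
      intro p hp
      rcases hvtxmem p hp with h | h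
      · exact Or.inr (Subtype.ext (Prod.ext h hp))
      · exact Or.inl (Subtype.ext (Prod.ext (by rw [h, hv]) hp))
  choose A hA1 hA2 hA3 using hAex
  have hAA : ∀ i, A (A i) = i := by
    intro i
    rcases hA3 (A i) i (hA1 i).symm with h | h
    · exact absurd (congrArg (fun p : Inc G => p.1.1) h.symm) (hA2 i)
    · exact h.symm
  have hAne : ∀ i, A i ≠ i := fun i h => hA2 i (congrArg (fun p : Inc G => p.1.1) h)
  -- the involution swapping the two edges at a vertex
  have hBex : ∀ i : Inc G, ∃ j : Inc G, j.1.1 = i.1.1 ∧ j.1.2 ≠ i.1.2 ∧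
      (∀ p : Inc G, p.1.1 = i.1.1 → p = i ∨ p = j) := by
    intro i
    have hcard : (G.incidenceFinset i.1.1).card = 2 := by
      rw [card_incidenceFinset_eq_degree, hreg]
    obtain ⟨e, f, hef, hset⟩ := Finset.card_eq_two.mp hcard
    have hmemInc : ∀ g : Sym2 V, g ∈ G.incidenceFinset i.1.1 →
        g ∈ G.edgeSet ∧ i.1.1 ∈ g := by
      intro g hg
      rw [mem_incidenceFinset] at hg
      exact ⟨hg.1, hg.2⟩
    have he : e ∈ G.incidenceFinset i.1.1 := by rw [hset]; simp
    have hf : f ∈ G.incidenceFinset i.1.1 := by rw [hset]; simp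
    have hie : i.1.2 ∈ G.incidenceFinset i.1.1 := by
      rw [mem_incidenceFinset]; exact ⟨i.2.1, i.2.2⟩
    have hmemP : ∀ p : Inc G, p.1.1 = i.1.1 → p.1.2 = e ∨ p.1.2 = f := by
      intro p hp
      have h : p.1.2 ∈ G.incidenceFinset i.1.1 := by
        rw [mem_incidenceFinset]
        exact ⟨p.2.1, hp ▸ p.2.2⟩
      rw [hset] at h
      simpa using h
    have hmk : ∀ g : Sym2 V, g ∈ G.incidenceFinset i.1.1 → Inc G := by
      intro g hg
      exact ⟨(i.1.1, g), (hmemInc g hg).1, (hmemInc g hg).2⟩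
    rcases hmemP i rfl with h | h
    · refine ⟨⟨(i.1.1, f), (hmemInc f hf).1, (hmemInc f hf).2⟩, rfl,
        by rw [h]; exact fun hq => hef hq.symm, ?_⟩
      intro p hp
      rcases hmemP p hp with h' | h'
      · exact Or.inl (Subtype.ext (Prod.ext hp (by rw [h', ← h])))
      · exact Or.inr (Subtype.ext (Prod.ext hp h'))
    · refine ⟨⟨(i.1.1, e), (hmemInc e he).1, (hmemInc e he).2⟩, rfl,
        by rw [h]; exact fun hq => hef hq, ?_⟩
      intro p hp
      rcases hmemP p hp with h' | h'
      · exact Or.inr (Subtype.ext (Prod.ext hp h'))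
      · exact Or.inl (Subtype.ext (Prod.ext hp (by rw [h', ← h])))
  choose B hB1 hB2 hB3 using hBex
  have hBB : ∀ i, B (B i) = i := by
    intro i
    rcases hB3 (B i) i (hB1 i).symm with h | h
    · exact absurd (congrArg (fun p : Inc G => p.1.2) h.symm) (hB2 i)
    · exact h.symm
  have hBne : ∀ i, B i ≠ i := fun i h => hB2 i (congrArg (fun p : Inc G => p.1.2) h)
  -- the sign function on incidences
  set t : Inc G → ℤ := fun i => σ i.1.2 with ht
  have ht1 : ∀ i, t i = 1 ∨ t i = -1 := fun i => hσ _ i.2.1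
  have htA : ∀ i, t (A i) = t i := fun i => by rw [ht]; simp only; rw [hA1]
  -- base point
  obtain ⟨v0⟩ := hconn.nonempty
  have hd0 : 0 < G.degree v0 := by rw [hreg]; omega
  obtain ⟨w0, hw0⟩ := (G.degree_pos_iff_exists_adj v0).mp hd0
  set x0 : Inc G := ⟨(v0, s(v0, w0)), G.mem_edgeSet.mpr hw0, Sym2.mem_mk_left v0 w0⟩
    with hx0
  -- closure property from connectivity
  have hclos : ∀ U : Set (Inc G), x0 ∈ U → (∀ i ∈ U, A i ∈ U) → (∀ i ∈ U, B i ∈ U) →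
      ∀ i, i ∈ U := by
    intro U h0 hAU hBU i
    have hsat : ∀ j ∈ U, ∀ p : Inc G, p.1.1 = j.1.1 → p ∈ U := by
      intro j hj p hp
      rcases hB3 j p hp with rfl | rfl
      · exact hj
      · exact hBU j hj
    have hwalk : ∀ (u w : V), G.Walk u w → (∀ p : Inc G, p.1.1 = u → p ∈ U) →
        ∀ p : Inc G, p.1.1 = w → p ∈ U := by
      intro u w hw
      induction hw with
      | nil => exact fun h => h
      | @cons u v w hadj q ih =>
        intro hu
        apply ih
        intro p hp
        have hiu : (⟨(u, s(u, v)), G.mem_edgeSet.mpr hadj, Sym2.mem_mk_left u v⟩ : Inc G)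
            ∈ U := hu _ rfl
        set iu : Inc G := ⟨(u, s(u, v)), G.mem_edgeSet.mpr hadj, Sym2.mem_mk_left u v⟩
          with hiudef
        have hvtx : (A iu).1.1 = v := by
          have h1 : (A iu).1.1 ∈ (A iu).1.2 := (A iu).2.2
          rw [hA1 iu] at h1
          rcases Sym2.mem_iff.mp h1 with h | h
          · exact absurd h (hA2 iu)
          · exact h
        exact hsat (A iu) (hAU iu hiu) p (by rw [hp, hvtx])
    obtain ⟨wlk⟩ := hconn.preconnected x0.1.1 i.1.1
    exact hwalk _ _ wlk (fun p hp => hsat x0 h0 p hp) i rfl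
  -- bridging products over A-transversals with the product over edges
  have hbr : ∀ s : Finset (Inc G), (∀ i, i ∈ s ∨ A i ∈ s) → (∀ i ∈ s, A i ∉ s) →
      ∏ i ∈ s, t i = ∏ e ∈ G.edgeFinset, σ e := by
    intro s hcov hdis
    refine Finset.prod_bij (fun i _ => i.1.2) ?_ ?_ ?_ ?_
    · exact fun i _ => mem_edgeFinset.mpr i.2.1
    · intro p hp q hq hpq
      rcases hA3 p q hpq.symm with rfl | rfl
      · rfl
      · exact absurd hq (hdis p hp)
    · intro e he
      obtain ⟨v, w, hadj, rfl⟩ := hrepSym e (mem_edgeFinset.mp he)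
      set ie : Inc G := ⟨(v, s(v, w)), G.mem_edgeSet.mpr hadj, Sym2.mem_mk_left v w⟩
      rcases hcov ie with h | h
      · exact ⟨ie, h, rfl⟩
      · exact ⟨A ie, h, hA1 ie⟩
    · exact fun i _ => rfl
  -- transversal over vertices
  have hpickv : ∀ v : V, ∃ i : Inc G, i.1.1 = v := by
    intro v
    have : 0 < G.degree v := by rw [hreg]; omega
    obtain ⟨w, hadj⟩ := (G.degree_pos_iff_exists_adj v).mp this
    exact ⟨⟨(v, s(v, w)), G.mem_edgeSet.mpr hadj, Sym2.mem_mk_left v w⟩, rfl⟩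
  choose pickv hpickv' using hpickv
  set sB : Finset (Inc G) := Finset.univ.image pickv with hsB
  have hsBcov : ∀ i : Inc G, i ∈ sB ∨ B i ∈ sB := by
    intro i
    have hmem : pickv i.1.1 ∈ sB := Finset.mem_image.mpr ⟨i.1.1, Finset.mem_univ _, rfl⟩
    rcases hB3 i (pickv i.1.1) (hpickv' _) with h | h
    · rw [← h]; exact Or.inl hmem
    · rw [← h]; exact Or.inr hmem
  have hsBdis : ∀ i ∈ sB, B i ∉ sB := by
    intro i hi hBi
    obtain ⟨v, _, hv⟩ := Finset.mem_image.mp hi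
    obtain ⟨v', _, hv'⟩ := Finset.mem_image.mp hBi
    have h1 : i.1.1 = v := by rw [← hv, hpickv']
    have h2 : (B i).1.1 = v' := by rw [← hv', hpickv']
    have h3 : v' = v := by rw [← h2, hB1, h1]
    rw [h3, hv] at hv'
    exact hBne i hv'.symm
  -- transversal over edges
  have hpicke : ∀ e : {e // e ∈ G.edgeFinset}, ∃ i : Inc G, i.1.2 = e.1 := by
    rintro ⟨e, he⟩
    obtain ⟨v, w, hadj, rfl⟩ := hrepSym e (mem_edgeFinset.mp he)
    exact ⟨⟨(v, s(v, w)), G.mem_edgeSet.mpr hadj, Sym2.mem_mk_left v w⟩, rfl⟩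
  choose picke hpicke' using hpicke
  set sA : Finset (Inc G) := G.edgeFinset.attach.image picke with hsA
  have hsAcov : ∀ i : Inc G, i ∈ sA ∨ A i ∈ sA := by
    intro i
    have hie : i.1.2 ∈ G.edgeFinset := mem_edgeFinset.mpr i.2.1
    have hmem : picke ⟨i.1.2, hie⟩ ∈ sA :=
      Finset.mem_image.mpr ⟨⟨i.1.2, hie⟩, Finset.mem_attach _ _, rfl⟩
    rcases hA3 i (picke ⟨i.1.2, hie⟩) (hpicke' _) with h | h
    · rw [← h]; exact Or.inl hmem
    · rw [← h]; exact Or.inr hmem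
  have hsAdis : ∀ i ∈ sA, A i ∉ sA := by
    intro i hi hAi
    obtain ⟨e, _, he⟩ := Finset.mem_image.mp hi
    obtain ⟨e', _, he'⟩ := Finset.mem_image.mp hAi
    have h1 : i.1.2 = e.1 := by rw [← he, hpicke']
    have h2 : (A i).1.2 = e'.1 := by rw [← he', hpicke']
    have h3 : e' = e := Subtype.ext (by rw [← h2, hA1, h1])
    rw [h3, he] at he'
    exact hAne i he'.symm
  -- equivalence of the coloring conditions with the functional equations
  have hPQ : ∀ γ : Inc G → ℤ,
      (IsEdgeColoringWith G σ {a, -a} γ ∧ IsProperInc G γ) ↔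
      ((∀ i, γ i = a ∨ γ i = -a) ∧ (∀ i, γ (A i) = -t i * γ i) ∧
        (∀ i, γ (B i) = -γ i)) := by
    intro γ
    constructor
    · rintro ⟨⟨hmemS, hcol⟩, hprop⟩
      have hval : ∀ i, γ i = a ∨ γ i = -a := by
        intro i
        have := hmemS i
        simpa [Set.mem_insert_iff] using this
      have hBc : ∀ i, γ (B i) = -γ i := by
        intro i
        have hne : γ (B i) ≠ γ i := hprop (B i) i (hB1 i) (hB2 i)
        rcases hval (B i) with h1 | h1 <;> rcases hval i with h2 | h2 <;>
          first
          | exact absurd (h1.trans h2.symm) hne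
          | (rw [h1, h2]; try ring)
      refine ⟨hval, ?_, hBc⟩
      intro i
      obtain ⟨v, w, hadj, hvw⟩ := hrepSym i.1.2 i.2.1
      set iv : Inc G := ⟨(v, s(v, w)), G.mem_edgeSet.mpr hadj, Sym2.mem_mk_left v w⟩
        with hiv
      set iw : Inc G := ⟨(w, s(v, w)), G.mem_edgeSet.mpr hadj, Sym2.mem_mk_right v w⟩
        with hiw
      have hcolvw : γ iv = -σ s(v, w) * γ iw := hcol hadj
      have hvtx : i.1.1 = v ∨ i.1.1 = w := by
        have h := i.2.2
        rw [hvw] at h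
        exact Sym2.mem_iff.mp h
      have hAvtx : (A i).1.1 = v ∨ (A i).1.1 = w := by
        have h := (A i).2.2
        rw [hA1 i, hvw] at h
        exact Sym2.mem_iff.mp h
      have hAne' : (A i).1.1 ≠ i.1.1 := hA2 i
      have hsig : σ i.1.2 = 1 ∨ σ i.1.2 = -1 := hσ _ i.2.1
      have hsw : σ s(v, w) = σ i.1.2 := by rw [hvw]
      rcases hvtx with hv | hv
      · have hieq : i = iv := Subtype.ext (Prod.ext hv (by rw [hiv]; exact hvw))
        have hAeq : A i = iw := by
          refine Subtype.ext (Prod.ext ?_ (by rw [hiw]; simp only; rw [← hvw]; exact hA1 i))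
          rcases hAvtx with h | h
          · exact absurd (h.trans hv.symm) hAne'
          · exact h
        rw [← hAeq, ← hieq, hsw] at hcolvw
        show γ (A i) = -σ i.1.2 * γ i
        rcases hsig with h | h <;> rw [h] at hcolvw ⊢ <;> linarith
      · have hieq : i = iw := Subtype.ext (Prod.ext hv (by rw [hiw]; exact hvw))
        have hAeq : A i = iv := by
          refine Subtype.ext (Prod.ext ?_ (by rw [hiv]; simp only; rw [← hvw]; exact hA1 i))
          rcases hAvtx with h | h
          · exact h
          · exact absurd (h.trans hv.symm) hAne'
        rw [← hAeq, ← hieq, hsw] at hcolvw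
        exact hcolvw
    · rintro ⟨hval, hAc, hBc⟩
      refine ⟨⟨?_, ?_⟩, ?_⟩
      · intro i
        rcases hval i with h | h <;> rw [h] <;> simp
      · intro v w hadj
        set iv : Inc G := ⟨(v, s(v, w)), G.mem_edgeSet.mpr hadj, Sym2.mem_mk_left v w⟩
          with hiv
        set iw : Inc G := ⟨(w, s(v, w)), G.mem_edgeSet.mpr hadj, Sym2.mem_mk_right v w⟩
          with hiw
        have hAeq : iw = A iv := by
          rcases hA3 iv iw rfl with h | h
          · exact absurd (congrArg (fun p : Inc G => p.1.1) h) hadj.ne'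
          · exact h
        have hcolA := hAc iv
        rw [← hAeq] at hcolA
        have hsig : σ s(v, w) = 1 ∨ σ s(v, w) = -1 := hσ _ (G.mem_edgeSet.mpr hadj)
        show γ iv = -σ s(v, w) * γ iw
        have htiv : t iv = σ s(v, w) := rfl
        rw [htiv] at hcolA
        rcases hsig with h | h <;> rw [h] at hcolA ⊢ <;> linarith
      · intro i j hv he
        rcases hB3 i j hv.symm with rfl | rfl
        · exact absurd rfl he
        · rw [hBc i]
          rcases hval i with h | h <;> rw [h] <;> omega
  -- assemble
  have hexist : ∏ e ∈ G.edgeFinset, σ e = 1 →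
      ∃ ε : Inc G → ℤ, (∀ i, ε i = a ∨ ε i = -a) ∧ (∀ i, ε (A i) = -t i * ε i) ∧
        (∀ i, ε (B i) = -ε i) := by
    intro hpos
    exact abstract_exists' A B hAA hBB hAne hBne x0 hclos t ht1 htA
      (fun s hc hd => (hbr s hc hd).trans hpos) a
  constructor
  · constructor
    · rintro ⟨γ, hγ⟩
      obtain ⟨hval, hAc, hBc⟩ := (hPQ γ).mp hγ
      have h1 := abstract_forward' A B hAA hBB t a ha sA sB hsAcov hsAdis hsBcov hsBdis
        γ hval hAc hBc
      rw [← hbr sA hsAcov hsAdis]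
      exact h1
    · intro hpos
      obtain ⟨ε, hε⟩ := hexist hpos
      exact ⟨ε, (hPQ ε).mpr hε⟩
  · intro hpos
    obtain ⟨ε, hval, hAc, hBc⟩ := hexist hpos
    set nε : Inc G → ℤ := fun i => -ε i with hnε
    have hnegQ : (∀ i, nε i = a ∨ nε i = -a) ∧
        (∀ i, nε (A i) = -t i * nε i) ∧ (∀ i, nε (B i) = -nε i) := by
      refine ⟨?_, ?_, ?_⟩
      · intro i
        rcases hval i with h | h <;> rw [hnε] <;> simp [h]
      · intro i; rw [hnε]; simp only; rw [hAc i]; ring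
      · intro i; rw [hnε]; simp only; rw [hBc i]
    have hsetEq : {γ : Inc G → ℤ | IsEdgeColoringWith G σ {a, -a} γ ∧ IsProperInc G γ}
        = {ε, nε} := by
      ext γ
      simp only [Set.mem_setOf_eq, Set.mem_insert_iff, Set.mem_singleton_iff]
      constructor
      · intro hγ
        obtain ⟨hval', hAc', hBc'⟩ := (hPQ γ).mp hγ
        rcases hval' x0 with h0 | h0 <;> rcases hval x0 with h1 | h1
        · exact Or.inl (abstract_unique' A B x0 hclos t γ ε hAc' hBc' hAc hBc
            (by rw [h0, h1]))
        · exact Or.inr (abstract_unique' A B x0 hclos t γ nε hAc' hBc'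
            hnegQ.2.1 hnegQ.2.2 (by rw [h0, hnε]; simp [h1]))
        · exact Or.inr (abstract_unique' A B x0 hclos t γ nε hAc' hBc'
            hnegQ.2.1 hnegQ.2.2 (by rw [h0, hnε]; simp [h1]))
        · exact Or.inl (abstract_unique' A B x0 hclos t γ ε hAc' hBc' hAc hBc
            (by rw [h0, h1]))
      · rintro (rfl | rfl)
        · exact (hPQ _).mpr ⟨hval, hAc, hBc⟩
        · exact (hPQ _).mpr hnegQ
    rw [hsetEq]
    refine Set.ncard_pair fun hcontra => ?_
    have h : ε x0 = -ε x0 := congrFun hcontra x0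
    rcases hval x0 with h1 | h1 <;> rw [h1] at h <;> omega
end

section
/- Let γ be a proper n-edge coloring of the signed graph Σ = (Γ, σ). Then: (i) the set Σ₀ of edges colored 0 (at both incidences) is a matching in Γ; and (ii) for every nonzero magnitude a, the spanning subgraph Σ_a consisting of the edges all of whose incidences are colored +a or −a has maximum degree at most 2, and every circle of Γ contained in Σ_a is positive (so Σ_a is balanced, i.e., a disjoint union of paths and positive circles). -/
open SimpleGraph

/-- An `n`-edge coloring of the signed graph `(G, σ)`: an assignment of colors from `Mset n`
to the incidences of `G` such that `γ(v,e) = -σ(e)·γ(w,e)` for each edge `e : vw`. -/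
structure SColoring {V : Type*} (G : SimpleGraph V) (σ : Sym2 V → ℤ) (n : ℕ) where
  col : V → Sym2 V → ℤ
  mem_colors : ∀ ⦃v w : V⦄, G.Adj v w → col v s(v, w) ∈ Mset n
  compat : ∀ ⦃v w : V⦄, G.Adj v w → col v s(v, w) = -σ s(v, w) * col w s(v, w)

namespace SColoring

variable {V : Type*} {G : SimpleGraph V} {σ : Sym2 V → ℤ} {n : ℕ}

/-- A coloring is proper if distinct edges incident to a common vertex receive
distinct colors at that vertex. -/
def Proper (c : SColoring G σ n) : Prop :=
  ∀ ⦃v w x : V⦄, G.Adj v w → G.Adj v x → w ≠ x → c.col v s(v, w) ≠ c.col v s(v, x)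

/-- A coloring is zero-free if the color `0` is never used. -/
def ZeroFree (c : SColoring G σ n) : Prop :=
  ∀ ⦃v w : V⦄, G.Adj v w → c.col v s(v, w) ≠ 0

/-- The color `a` is absent at the vertex `v` if no edge incident to `v` is
colored `a` at `v`. -/
def Absent (c : SColoring G σ n) (a : ℤ) (v : V) : Prop :=
  ∀ ⦃w : V⦄, G.Adj v w → c.col v s(v, w) ≠ a

end SColoring

/-- The magnitude graph `Σ_a`: the spanning subgraph of `G` consisting of the edges
all of whose incidences are colored `+a` or `-a`. -/
def magGraph {V : Type*} (G : SimpleGraph V) (col : V → Sym2 V → ℤ) (a : ℤ) :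
    SimpleGraph V where
  Adj v w := G.Adj v w ∧ (col v s(v, w) = a ∨ col v s(v, w) = -a) ∧
    (col w s(v, w) = a ∨ col w s(v, w) = -a)
  symm := by
    constructor
    rintro v w ⟨h1, h2, h3⟩
    exact ⟨h1.symm, by rwa [Sym2.eq_swap], by rwa [Sym2.eq_swap]⟩
  loopless := by
    constructor
    intro v h
    exact G.irrefl h.1

/-- No vertex repeats at distance 2 in the list. -/
def noback {V : Type*} : List V → Prop
  | a :: b :: c :: l => a ≠ c ∧ noback (b :: c :: l)
  | _ => True

lemma noback_of_nodup {V : Type*} : ∀ (l : List V), l.Nodup → noback l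
  | [], _ => trivial
  | [_], _ => trivial
  | [_, _], _ => trivial
  | a :: b :: c :: l, h => by
    rw [List.nodup_cons] at h
    exact ⟨fun hac => h.1 (hac ▸ List.mem_cons_of_mem _ List.mem_cons_self),
      noback_of_nodup _ h.2⟩

section Aux

variable {V : Type*} {G : SimpleGraph V} {σ : Sym2 V → ℤ} {n : ℕ} {c : SColoring G σ n}
  {a : ℤ}

lemma mag_adj {v w : V} (h : (magGraph G c.col a).Adj v w) :
    G.Adj v w ∧ (c.col v s(v, w) = a ∨ c.col v s(v, w) = -a) ∧
      (c.col w s(v, w) = a ∨ c.col w s(v, w) = -a) := h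

lemma colA (hσ : ∀ e ∈ G.edgeSet, σ e = 1 ∨ σ e = -1) {v w : V} (h : G.Adj v w) :
    c.col w s(v, w) = -σ s(v, w) * c.col v s(v, w) := by
  have h1 := c.compat h
  rcases hσ s(v, w) (G.mem_edgeSet.2 h) with h2 | h2 <;> rw [h2] at h1 ⊢ <;> linarith

lemma colB (hc : c.Proper) {u v w : V} (h1 : (magGraph G c.col a).Adj u v)
    (h2 : (magGraph G c.col a).Adj v w) (huw : u ≠ w) :
    c.col v s(v, w) = -c.col v s(v, u) := by
  have hx : c.col v s(v, u) = a ∨ c.col v s(v, u) = -a := by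
    have h3 := (mag_adj h1).2.2
    rwa [Sym2.eq_swap] at h3
  have hy : c.col v s(v, w) = a ∨ c.col v s(v, w) = -a := (mag_adj h2).2.1
  have hne := hc (mag_adj h1).1.symm (mag_adj h2).1 huw
  rcases hx with hx | hx <;> rcases hy with hy | hy <;> omega

lemma walk_prod (hσ : ∀ e ∈ G.edgeSet, σ e = 1 ∨ σ e = -1) (hc : c.Proper) {x v : V}
    (W : (magGraph G c.col a).Walk x v) :
    ∀ u : V, (magGraph G c.col a).Adj u x → noback (u :: W.support) →
    ∃ p, (magGraph G c.col a).Adj p v ∧ [p, v] <:+ (u :: W.support) ∧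
      c.col v s(p, v) = (W.edges.map σ).prod * c.col x s(u, x) := by
  induction W with
  | nil =>
    intro u hu _
    exact ⟨u, hu, List.suffix_rfl, by simp⟩
  | @cons x y v h W ih =>
    intro u hu hnb
    rw [SimpleGraph.Walk.support_cons, W.support_eq_cons] at hnb
    simp only [noback] at hnb
    obtain ⟨huy, hnb2⟩ := hnb
    have key : c.col y s(x, y) = σ s(x, y) * c.col x s(u, x) := by
      have hB := colB hc hu h huy
      have hA := colA (c := c) hσ ((mag_adj h).1)
      rw [hB] at hA
      rw [hA, show s(x, u) = s(u, x) from Sym2.eq_swap]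
      ring
    obtain ⟨p, hp, hsuf, heq⟩ := ih x h (by rw [W.support_eq_cons]; exact hnb2)
    refine ⟨p, hp, ?_, ?_⟩
    · rw [SimpleGraph.Walk.support_cons]
      exact hsuf.trans (List.suffix_cons u _)
    · rw [SimpleGraph.Walk.edges_cons, List.map_cons, List.prod_cons, heq, key]
      ring

end Aux

/-- For a proper `n`-edge coloring `γ` of `Σ`: (i) the edges colored `0` form a matching;
(ii) for every nonzero magnitude `a`, the magnitude graph `Σ_a` has maximum degree at
most `2` and every circle contained in it is positive, i.e. `Σ_a` is balanced. -/
theorem magnitude_subgraphs {V : Type*} [Fintype V] (G : SimpleGraph V)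
    (σ : Sym2 V → ℤ) (hσ : ∀ e ∈ G.edgeSet, σ e = 1 ∨ σ e = -1)
    (n : ℕ) (c : SColoring G σ n) (hc : c.Proper) :
    (∀ ⦃v w x : V⦄, G.Adj v w → G.Adj v x →
      c.col v s(v, w) = 0 → c.col v s(v, x) = 0 → w = x) ∧
    (∀ a : ℤ, a ≠ 0 →
      (∀ v : V, ((magGraph G c.col a).neighborSet v).ncard ≤ 2) ∧
      (∀ (v : V) (W : (magGraph G c.col a).Walk v v), W.IsCycle →
        (W.edges.map σ).prod = 1)) := by

  constructor
  · intro v w x hvw hvx h0w h0x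
    by_contra hne
    exact hc hvw hvx hne (h0w.trans h0x.symm)
  · intro a ha
    constructor
    · intro v
      have hinj : Set.InjOn (fun w => c.col v s(v, w))
          ((magGraph G c.col a).neighborSet v) := by
        intro w hw x hx hwx
        by_contra hne
        exact hc (mag_adj hw).1 (mag_adj hx).1 hne hwx
      have himg : (fun w => c.col v s(v, w)) '' ((magGraph G c.col a).neighborSet v)
          ⊆ {a, -a} := by
        rintro _ ⟨w, hw, rfl⟩
        exact (mag_adj hw).2.1
      calc ((magGraph G c.col a).neighborSet v).ncard
          = ((fun w => c.col v s(v, w)) '' ((magGraph G c.col a).neighborSet v)).ncard :=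
            (Set.ncard_image_of_injOn hinj).symm
        _ ≤ ({a, -a} : Set ℤ).ncard :=
            Set.ncard_le_ncard himg ((Set.finite_singleton (-a)).insert a)
        _ ≤ 2 := by
            rw [Set.ncard_pair (by omega : a ≠ -a)]
    · intro v W hW
      cases W with
      | nil => exact absurd rfl hW.ne_nil
      | @cons _ y _ h W' =>
        have hlen : 3 ≤ (SimpleGraph.Walk.cons h W').length := hW.three_le_length
        rw [SimpleGraph.Walk.length_cons] at hlen
        have hnodup : W'.support.Nodup := by
          have h1 := hW.support_nodup
          rwa [SimpleGraph.Walk.support_cons, List.tail_cons] at h1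
        obtain ⟨z, r, hzr⟩ : ∃ z r, W'.support.tail = z :: r := by
          have h1 : W'.support.tail ≠ [] := by
            have := W'.length_support
            intro hnil
            rw [W'.support_eq_cons, hnil] at this
            simp only [List.length_cons, List.length_nil] at this; omega
          exact List.exists_cons_of_ne_nil h1
        have hsupp : W'.support = y :: z :: r := by rw [W'.support_eq_cons, hzr]
        have hrne : r ≠ [] := by
          have := W'.length_support
          rw [hsupp] at this
          intro hnil; rw [hnil] at this; simp at this; omega
        have hvmem : v ∈ r := by
          obtain ⟨b, r', rfl⟩ := List.exists_cons_of_ne_nil hrne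
          have h1 : W'.support.getLast? = some v := by
            rw [List.getLast?_eq_getLast W'.support_ne_nil, W'.getLast_support]
          rw [hsupp, List.getLast?_cons_cons, List.getLast?_cons_cons] at h1
          exact List.mem_of_getLast? h1
        have hnb : noback (v :: W'.support) := by
          rw [hsupp]
          refine ⟨?_, ?_⟩
          · rw [hsupp] at hnodup
            intro hvz
            exact (List.nodup_cons.1 (List.nodup_cons.1 hnodup).2).1 (hvz ▸ hvmem)
          · exact hsupp ▸ noback_of_nodup _ hnodup
        obtain ⟨p, hp, hsuf, heq⟩ := walk_prod hσ hc W' v h hnb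
        have hpy : p ≠ y := by
          rw [hsupp] at hsuf
          rcases List.suffix_cons_iff.1 hsuf with h1 | h1
          · exfalso
            have := congrArg List.length h1
            simp at this
          rcases List.suffix_cons_iff.1 h1 with h2 | h2
          · exfalso
            have := congrArg List.length h2
            simp at this
            rcases r with _ | ⟨_, _⟩
            · exact hrne rfl
            · simp at this
          · have hpmem : p ∈ z :: r := h2.subset List.mem_cons_self
            rw [hsupp] at hnodup
            intro hpyeq
            exact (List.nodup_cons.1 hnodup).1 (hpyeq ▸ hpmem)
        have hB : c.col v s(v, y) = -c.col v s(v, p) := colB hc hp h hpy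
        have hA : c.col y s(v, y) = -σ s(v, y) * c.col v s(v, y) := colA hσ (mag_adj h).1
        rw [hB] at hA
        have hkey : c.col y s(v, y) = σ s(v, y) * c.col v s(p, v) := by
          rw [hA, show s(v, p) = s(p, v) from Sym2.eq_swap]; ring
        rw [hkey] at heq
        have hne0 : c.col v s(p, v) ≠ 0 := by
          rcases (mag_adj hp).2.2 with h1 | h1 <;> omega
        have hfac : ((W'.edges.map σ).prod * σ s(v, y) - 1) * c.col v s(p, v) = 0 := by
          linarith [heq]
        rw [SimpleGraph.Walk.edges_cons, List.map_cons, List.prod_cons]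
        rcases mul_eq_zero.1 hfac with h1 | h1
        · linarith
        · exact absurd h1 hne0
end

section
/- Suppose the a/b-Kempe chain K_{a,b}(v₀, v_m) of a proper n-edge coloring of a signed graph has a repeated vertex, say v_j = v_s with j < s. Then the subtrail (v_j, v_{j+1}, …, v_s) of the chain contains an odd number of positive edges. -/
open SimpleGraph

/-- The defining properties of an `a/b`-Kempe trail of the coloring `c` starting at the
vertex `v₀` (where `a` is absent at `v₀` and the chain starts with a `b`-colored edge):
it is a trail whose edge-color magnitudes alternate `|b|, |a|, |b|, …`, and at each
interior vertex `v i` the two incident chain edges are colored `(-1)^{t_i}·a` and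
`(-1)^{t_i}·b`, where `t_i` is the number of positive edges among the first `i` edges
of the trail. -/
def IsKempeTrail {V : Type*} {G : SimpleGraph V} {σ : Sym2 V → ℤ} {n : ℕ}
    (c : SColoring G σ n) (a b : ℤ) {v₀ vm : V} (W : G.Walk v₀ vm) : Prop :=
  W.IsTrail ∧
  c.Absent a v₀ ∧
  (0 < W.length → c.col v₀ s(v₀, W.getVert 1) = b) ∧
  (∀ i < W.length,
    (c.col (W.getVert i) s(W.getVert i, W.getVert (i + 1))).natAbs =
      if Even i then b.natAbs else a.natAbs) ∧
  (∀ i, 0 < i → i < W.length →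
    ({c.col (W.getVert i) s(W.getVert (i - 1), W.getVert i),
      c.col (W.getVert i) s(W.getVert i, W.getVert (i + 1))} : Set ℤ) =
    {(-1) ^ ((W.edges.take i).countP fun e => σ e == 1) * a,
     (-1) ^ ((W.edges.take i).countP fun e => σ e == 1) * b})

/-- The `a/b`-Kempe chain `K_{a,b}(v₀, vm)`: a *maximal* `a/b`-Kempe trail. -/
def IsKempeChain {V : Type*} {G : SimpleGraph V} {σ : Sym2 V → ℤ} {n : ℕ}
    (c : SColoring G σ n) (a b : ℤ) {v₀ vm : V} (W : G.Walk v₀ vm) : Prop :=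
  IsKempeTrail c a b W ∧
    ∀ ⦃x : V⦄ (h : G.Adj vm x), ¬IsKempeTrail c a b (W.concat h)

lemma walk_edges_getElem {V : Type*} {G : SimpleGraph V} {u v : V}
    (W : G.Walk u v) (i : ℕ) (h : i < W.length) :
    W.edges[i]'(by rw [SimpleGraph.Walk.length_edges]; exact h)
      = s(W.getVert i, W.getVert (i + 1)) := by
  induction W generalizing i with
  | nil => simp at h
  | cons hadj p ih =>
    match i with
    | 0 => simp [SimpleGraph.Walk.getVert_cons_succ]
    | (n+1) =>
      simp only [SimpleGraph.Walk.edges_cons, List.getElem_cons_succ,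
        SimpleGraph.Walk.getVert_cons_succ]
      exact ih n (by simpa using h)

/-- If the `a/b`-Kempe chain `K_{a,b}(v₀, vm)` of a proper `n`-edge coloring has a
repeated vertex `v j = v k` with `j < k`, then the subtrail `(v j, …, v k)` contains
an odd number of positive edges. -/
theorem kempeChain_self_intersection_odd_positive {V : Type*} [Fintype V]
    (G : SimpleGraph V) (σ : Sym2 V → ℤ) (hσ : ∀ e ∈ G.edgeSet, σ e = 1 ∨ σ e = -1)
    (n : ℕ) (c : SColoring G σ n) (hc : c.Proper)
    (a b : ℤ) (ha : a ∈ Mset n) (hb : b ∈ Mset n) {v₀ vm : V}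
    (hbpres : ∃ w : V, G.Adj v₀ w ∧ c.col v₀ s(v₀, w) = b)
    (W : G.Walk v₀ vm) (hW : IsKempeChain c a b W)
    (j k : ℕ) (hjk : j < k) (hk : k ≤ W.length)
    (hrep : W.getVert j = W.getVert k) :
    Odd (((W.edges.drop j).take (k - j)).countP fun e => σ e == 1) := by
  obtain ⟨⟨htrail, habs, hstart, hmag, hint⟩, -⟩ := hW
  set g : ℕ → V := W.getVert with hg
  set t : ℕ → ℕ := fun i => (W.edges.take i).countP (fun e => σ e == 1) with htdef
  -- signs of chain edges
  have hσ' : ∀ i < W.length, σ s(g i, g (i+1)) = 1 ∨ σ s(g i, g (i+1)) = -1 := by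
    intro i hi
    exact hσ _ (G.mem_edgeSet.mpr (W.adj_getVert_succ hi))
  -- sign-count step
  have hstep : ∀ i < W.length,
      ((-1 : ℤ)) ^ t (i+1) = -σ s(g i, g (i+1)) * (-1) ^ t i := by
    intro i hi
    have hil : i < W.edges.length := by rw [W.length_edges]; exact hi
    have htake : W.edges.take (i+1)
        = W.edges.take i ++ [s(g i, g (i+1))] := by
      rw [List.take_succ, List.getElem?_eq_getElem hil, walk_edges_getElem W i hi]
      rfl
    rcases hσ' i hi with h1 | h1 <;>
      simp [htdef, htake, List.countP_append, List.countP_cons, h1, pow_succ] <;> ring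
  -- the color of the chain edge `e i` at its left endpoint
  have hR : ∀ i < W.length,
      c.col (g i) s(g i, g (i+1)) ∈ ({(-1)^(t i) * a, (-1)^(t i) * b} : Set ℤ) := by
    intro i hi
    rcases Nat.eq_zero_or_pos i with rfl | hpos
    · have h0 : t 0 = 0 := by simp [htdef]
      have hb0 := hstart (by omega)
      right
      rw [h0, pow_zero, one_mul]
      simpa [hg, SimpleGraph.Walk.getVert_zero] using hb0
    · have hmem : c.col (g i) s(g i, g (i+1)) ∈
          ({c.col (g i) s(g (i-1), g i), c.col (g i) s(g i, g (i+1))} : Set ℤ) :=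
        Set.mem_insert_iff.mpr (Or.inr rfl)
      rwa [hint i hpos hi] at hmem
  -- the color of the chain edge `e (i-1)` at its right endpoint
  have hL : ∀ i, 0 < i → i ≤ W.length →
      c.col (g i) s(g (i-1), g i) ∈ ({(-1)^(t i) * a, (-1)^(t i) * b} : Set ℤ) := by
    intro i hpos hle
    obtain ⟨m, rfl⟩ : ∃ m, i = m + 1 := ⟨i - 1, (Nat.succ_pred_eq_of_pos hpos).symm⟩
    have hm : m < W.length := by omega
    have hadj : G.Adj (g m) (g (m+1)) := W.adj_getVert_succ hm
    have hcomp := c.compat hadj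
    have hcol : c.col (g (m+1)) s(g m, g (m+1))
        = -σ s(g m, g (m+1)) * c.col (g m) s(g m, g (m+1)) := by
      rcases hσ' m hm with h1 | h1 <;> rw [h1] at hcomp ⊢ <;> linarith
    have hstepm := hstep m hm
    have hidx : m + 1 - 1 = m := by omega
    rw [hidx]
    rcases hR m hm with hx | hx
    · exact Set.mem_insert_iff.mpr (Or.inl (by rw [hcol, hx, hstepm]; ring))
    · refine Set.mem_insert_iff.mpr (Or.inr ?_)
      rw [Set.mem_singleton_iff] at hx ⊢
      rw [hcol, hx, hstepm]; ring
  -- distinct chain edges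
  have hne : ∀ p q, p < W.length → q < W.length → p ≠ q →
      s(g p, g (p+1)) ≠ s(g q, g (q+1)) := by
    intro p q hp hq hpq heq
    apply hpq
    rw [← walk_edges_getElem W p hp, ← walk_edges_getElem W q hq] at heq
    exact (htrail.edges_nodup.getElem_inj_iff).mp heq
  -- suppose the count is even
  by_contra hodd
  rw [Nat.not_odd_iff_even] at hodd
  have hsplit : t k = t j + ((W.edges.drop j).take (k - j)).countP (fun e => σ e == 1) := by
    have h1 : W.edges.take k = W.edges.take j ++ (W.edges.drop j).take (k - j) := by
      conv_lhs => rw [show k = j + (k - j) by omega]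
      exact List.take_add ..
    simp [htdef, h1, List.countP_append]
  have heps : ((-1 : ℤ)) ^ t k = (-1) ^ t j := by
    rw [hsplit, pow_add, hodd.neg_one_pow, mul_one]
  -- k > j + 1
  have hk2 : j + 1 < k := by
    rcases Nat.lt_or_ge (j+1) k with h | h
    · exact h
    · exfalso
      have hkj : k = j + 1 := by omega
      have := (W.adj_getVert_succ (show j < W.length by omega)).ne
      rw [← hkj] at this
      exact this hrep
  have hkl : k - 1 < W.length := by omega
  have hadjk : G.Adj (g (k-1)) (g k) := by
    have := W.adj_getVert_succ hkl
    rwa [show k - 1 + 1 = k by omega] at this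
  have hX := hL k (by omega) hk
  rw [heps] at hX
  rcases Nat.eq_zero_or_pos j with rfl | hjpos
  · -- case j = 0 : the repeated vertex is v₀
    have ht0 : t 0 = 0 := by simp [htdef]
    rw [ht0, pow_zero, one_mul, one_mul] at hX
    have hg0 : g 0 = v₀ := W.getVert_zero
    have hadj0 : G.Adj v₀ (g (k-1)) := by
      rw [← hg0]; rw [← hrep] at hadjk; exact hadjk.symm
    have hXeq : c.col (g k) s(g (k-1), g k) = c.col v₀ s(v₀, g (k-1)) := by
      rw [← hrep, hg0, Sym2.eq_swap]
    rw [hXeq] at hX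
    rcases hX with hx | hx
    · exact habs hadj0 hx
    · rw [Set.mem_singleton_iff] at hx
      have hb1 := hstart (by omega)
      have hv1 : g (k-1) ≠ W.getVert 1 := by
        intro hveq
        refine hne (k-1) 0 hkl (by omega) (by omega) ?_
        rw [show k - 1 + 1 = k by omega, ← hrep, hg0, hveq, Sym2.eq_swap]
      have hadj1 : G.Adj v₀ (W.getVert 1) := by
        have := W.adj_getVert_succ (show 0 < W.length by omega)
        rwa [W.getVert_zero] at this
      exact hc hadj0 hadj1 hv1 (by rw [hx, hb1])
  · -- case j > 0 : the repeated vertex is interior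
    have hjl : j < W.length := by omega
    have hSet := hint j hjpos hjl
    rw [← hSet] at hX
    have hadjm : G.Adj (g j) (g (j-1)) := by
      have := W.adj_getVert_succ (show j - 1 < W.length by omega)
      rw [show j - 1 + 1 = j by omega] at this
      exact this.symm
    have hadjp : G.Adj (g j) (g (j+1)) := W.adj_getVert_succ hjl
    have hadjk' : G.Adj (g j) (g (k-1)) := by
      rw [hrep]; exact hadjk.symm
    have hXeq : c.col (g k) s(g (k-1), g k) = c.col (g j) s(g j, g (k-1)) := by
      rw [← hrep, Sym2.eq_swap]
    rw [hXeq] at hX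
    have hnm : g (k-1) ≠ g (j-1) := by
      intro hveq
      refine hne (k-1) (j-1) hkl (by omega) (by omega) ?_
      rw [show k - 1 + 1 = k by omega, show j - 1 + 1 = j by omega, ← hrep, hveq]
    have hnp : g (k-1) ≠ g (j+1) := by
      intro hveq
      refine hne (k-1) j hkl hjl (by omega) ?_
      rw [show k - 1 + 1 = k by omega, ← hrep, hveq, Sym2.eq_swap]
    rcases hX with hx | hx
    · refine hc hadjk' hadjm hnm ?_
      rw [hx, Sym2.eq_swap]
    · rw [Set.mem_singleton_iff] at hx
      exact hc hadjk' hadjp hnp hx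
end

section
/- For every signature σ : E(K_{3,3}) → {+1, −1} on the complete bipartite graph K_{3,3}, the signed graph (K_{3,3}, σ) admits a proper 3-edge coloring (using colors from M₃ = {−1, 0, +1}). -/
open SimpleGraph

namespace K33Aux

/-- Twist a color code by a sign (`true` means negate). -/
def tw (b : Bool) (c : Fin 3) : Fin 3 := if b then 2 - c else c

/-- The six permutations of `Fin 3`. -/
def perms : Fin 6 → Fin 3 → Fin 3
  | 0 => ![0,1,2] | 1 => ![0,2,1] | 2 => ![1,0,2]
  | 3 => ![1,2,0] | 4 => ![2,0,1] | 5 => ![2,1,0]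

/-- Column distinctness condition. -/
def colOK (b0 b1 b2 : Bool) (c0 c1 c2 : Fin 3) : Prop :=
  tw b0 c0 ≠ tw b1 c1 ∧ tw b0 c0 ≠ tw b2 c2 ∧ tw b1 c1 ≠ tw b2 c2

instance (b0 b1 b2 : Bool) (c0 c1 c2 : Fin 3) : Decidable (colOK b0 b1 b2 c0 c1 c2) := by
  unfold colOK; infer_instance

theorem perms_inj (q : Fin 6) : Function.Injective (perms q) := by
  fin_cases q <;> decide

set_option maxRecDepth 100000 in
set_option maxHeartbeats 4000000 in
/-- The combinatorial core: for every sign pattern on the 3×3 grid there is a choice of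
row permutations so that all twisted columns are rainbow. -/
theorem key : ∀ b00 b01 b02 b10 b11 b12 b20 b21 b22 : Bool,
    ∃ p0 p1 p2 : Fin 6,
      colOK b00 b10 b20 (perms p0 0) (perms p1 0) (perms p2 0) ∧
      colOK b01 b11 b21 (perms p0 1) (perms p1 1) (perms p2 1) ∧
      colOK b02 b12 b22 (perms p0 2) (perms p1 2) (perms p2 2) := by decide

/-- Repackaged version of `key`. -/
theorem key' (s : Fin 3 → Fin 3 → Bool) :
    ∃ A : Fin 3 → Fin 3 → Fin 3, (∀ i, Function.Injective (A i)) ∧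
      ∀ j i i' : Fin 3, i ≠ i' → tw (s i j) (A i j) ≠ tw (s i' j) (A i' j) := by
  obtain ⟨p0, p1, p2, h0, h1, h2⟩ :=
    key (s 0 0) (s 0 1) (s 0 2) (s 1 0) (s 1 1) (s 1 2) (s 2 0) (s 2 1) (s 2 2)
  obtain ⟨h0a, h0b, h0c⟩ := h0
  obtain ⟨h1a, h1b, h1c⟩ := h1
  obtain ⟨h2a, h2b, h2c⟩ := h2
  refine ⟨fun i => perms (![p0, p1, p2] i), fun i => perms_inj _, ?_⟩
  intro j i i' hne
  have h0a' := h0a.symm; have h0b' := h0b.symm; have h0c' := h0c.symm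
  have h1a' := h1a.symm; have h1b' := h1b.symm; have h1c' := h1c.symm
  have h2a' := h2a.symm; have h2b' := h2b.symm; have h2c' := h2c.symm
  fin_cases j <;> fin_cases i <;> fin_cases i' <;> simp_all

/-- Color codes as integers `-1, 0, 1`. -/
def val (c : Fin 3) : ℤ := (c : ℤ) - 1

theorem val_inj : Function.Injective val := by decide

theorem val_mem (c : Fin 3) : val c ∈ Mset 3 := by
  fin_cases c <;> exact ⟨by decide, fun _ => ⟨1, by ring⟩⟩

theorem neg_val_mem (c : Fin 3) : -val c ∈ Mset 3 := by
  fin_cases c <;> exact ⟨by decide, fun _ => ⟨1, by ring⟩⟩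

theorem val_tw (b : Bool) (c : Fin 3) :
    val (tw b c) = (if b then (-1 : ℤ) else 1) * val c := by
  cases b <;> fin_cases c <;> decide

end K33Aux

/-- Every signature on the complete bipartite graph `K_{3,3}` yields a signed graph
admitting a proper `3`-edge coloring. -/
theorem K33_every_signature_three_colorable
    (σ : Sym2 (Fin 3 ⊕ Fin 3) → ℤ)
    (hσ : ∀ e ∈ (completeBipartiteGraph (Fin 3) (Fin 3)).edgeSet,
      σ e = 1 ∨ σ e = -1) :
    ∃ c : SColoring (completeBipartiteGraph (Fin 3) (Fin 3)) σ 3, c.Proper := by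
  classical
  set s : Fin 3 → Fin 3 → Bool :=
    fun i j => decide (σ s(Sum.inl i, Sum.inr j) = 1) with hsdef
  have hadj : ∀ i j : Fin 3,
      (completeBipartiteGraph (Fin 3) (Fin 3)).Adj (Sum.inl i) (Sum.inr j) := by
    intro i j; simp
  have hs : ∀ i j, σ s(Sum.inl i, Sum.inr j) = if s i j then 1 else -1 := by
    intro i j
    by_cases h : σ s(Sum.inl i, Sum.inr j) = 1
    · simp [hsdef, h]
    · rcases hσ s(Sum.inl i, Sum.inr j)
        (by rw [SimpleGraph.mem_edgeSet]; exact hadj i j) with h1 | h1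
      · exact absurd h1 h
      · simp [hsdef, h, h1]
  obtain ⟨A, hAinj, hcol⟩ := K33Aux.key' s
  -- the incidence coloring
  set f : (Fin 3 ⊕ Fin 3) → (Fin 3 ⊕ Fin 3) → ℤ := fun v w =>
    match v, w with
    | Sum.inl i, Sum.inr j => K33Aux.val (A i j)
    | Sum.inr j, Sum.inl i => -σ s(Sum.inl i, Sum.inr j) * K33Aux.val (A i j)
    | _, _ => 0 with hf
  set col : (Fin 3 ⊕ Fin 3) → Sym2 (Fin 3 ⊕ Fin 3) → ℤ := fun v e =>
    Sym2.lift ⟨fun a b => f v a + f v b - f v v, fun a b => by ring⟩ e with hcoldef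
  have col_mk : ∀ v a b, col v s(a, b) = f v a + f v b - f v v := by
    intro v a b; simp [hcoldef]
  have col_eq : ∀ v w, col v s(v, w) = f v w := by
    intro v w; rw [col_mk]; ring
  have fval : ∀ i j, f (Sum.inl i) (Sum.inr j) = K33Aux.val (A i j) := fun _ _ => rfl
  have fval' : ∀ i j, f (Sum.inr j) (Sum.inl i)
      = -σ s(Sum.inl i, Sum.inr j) * K33Aux.val (A i j) := fun _ _ => rfl
  have fzero : ∀ j j' : Fin 3, f (Sum.inr j) (Sum.inr j') = 0 := fun _ _ => rfl
  have fzero' : ∀ j j' : Fin 3, f (Sum.inl j) (Sum.inl j') = 0 := fun _ _ => rfl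
  have fright : ∀ i j, col (Sum.inr j) s(Sum.inr j, Sum.inl i)
      = K33Aux.val (K33Aux.tw (s i j) (A i j)) := by
    intro i j
    rw [col_eq, fval' i j, hs i j, K33Aux.val_tw]
    cases s i j <;> norm_num
  have hmem : ∀ ⦃v w : Fin 3 ⊕ Fin 3⦄,
      (completeBipartiteGraph (Fin 3) (Fin 3)).Adj v w → col v s(v, w) ∈ Mset 3 := by
    rintro (i | i) (j | j) hvw
    · simp at hvw
    · rw [col_eq, fval]; exact K33Aux.val_mem _
    · rw [col_eq, fval' j i, hs j i]
      cases s j i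
      · simpa using K33Aux.val_mem (A j i)
      · simpa using K33Aux.neg_val_mem (A j i)
    · simp at hvw
  have hcompat : ∀ ⦃v w : Fin 3 ⊕ Fin 3⦄,
      (completeBipartiteGraph (Fin 3) (Fin 3)).Adj v w →
        col v s(v, w) = -σ s(v, w) * col w s(v, w) := by
    rintro (i | i) (j | j) hvw
    · simp at hvw
    · rw [col_eq, fval, col_mk, fval' i j, fzero j j, hs i j]
      cases s i j <;> norm_num
    · rw [show s(Sum.inr i, Sum.inl j) = s(Sum.inl j, Sum.inr i) from Sym2.eq_swap]
      rw [col_mk, fval' j i, fzero i i, col_eq, fval, hs j i]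
      cases s j i <;> norm_num
    · simp at hvw
  refine ⟨⟨col, hmem, hcompat⟩, ?_⟩
  rintro (i | i) (j | j) (k | k) hvw hvx hwx
  · simp at hvw
  · simp at hvw
  · simp at hvx
  · -- left vertex i, right neighbors j k
    have hjk : j ≠ k := fun h => hwx (by rw [h])
    show col (Sum.inl i) s(Sum.inl i, Sum.inr j) ≠ col (Sum.inl i) s(Sum.inl i, Sum.inr k)
    rw [col_eq, col_eq, fval, fval]
    intro h
    exact hjk (hAinj i (K33Aux.val_inj h))
  · -- right vertex i, left neighbors j k
    have hjk : j ≠ k := fun h => hwx (by rw [h])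
    show col (Sum.inr i) s(Sum.inr i, Sum.inl j) ≠ col (Sum.inr i) s(Sum.inr i, Sum.inl k)
    rw [fright j i, fright k i]
    intro h
    exact hcol i j k hjk (K33Aux.val_inj h)
  · simp at hvx
  · simp at hvw
  · simp at hvw
end

section
/- Let Γ be a finite connected 3-regular simple graph with no isthmus that contains a Hamiltonian cycle, and let m = |E(Γ)|. Then the number of signatures σ : E(Γ) → {+1, −1} for which the signed graph (Γ, σ) admits a proper 3-edge coloring is at least 2^{m−1} (i.e., at least half of all 2^m signatures). -/
open SimpleGraph

section Aux

open SimpleGraph Walk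

variable {V : Type*} {G : SimpleGraph V}

lemma myWalk_getElem_support {u v : V} (p : G.Walk u v) : ∀ (i : ℕ) (hi : i < p.support.length),
    p.support[i] = p.getVert i := by
  induction p with
  | nil => intro i hi; simp [Walk.support_nil] at hi; subst hi; rfl
  | cons h q ih =>
      intro i hi
      cases i with
      | zero => rfl
      | succ n =>
          simp only [Walk.support_cons, List.getElem_cons_succ, Walk.getVert_cons_succ]
          exact ih n (by simpa [Walk.support_cons] using hi)

lemma myWalk_getElem_edges {u v : V} (p : G.Walk u v) : ∀ (i : ℕ) (hi : i < p.edges.length),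
    p.edges[i] = s(p.getVert i, p.getVert (i+1)) := by
  induction p with
  | nil => intro i hi; simp at hi
  | cons h q ih =>
      intro i hi
      cases i with
      | zero => simp [Walk.edges_cons, Walk.getVert_zero, Walk.getVert_cons_succ]
      | succ n =>
          simp only [Walk.edges_cons, List.getElem_cons_succ, Walk.getVert_cons_succ]
          exact ih n (by simpa [Walk.edges_cons] using hi)

lemma prod_pm : ∀ (l : List ℤ), (∀ a ∈ l, a = 1 ∨ a = -1) → l.prod = 1 ∨ l.prod = -1
  | [], _ => Or.inl rfl
  | a :: l, h => by
      rcases h a (by simp) with h1 | h1 <;>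
      rcases prod_pm l (fun b hb => h b (by simp [hb])) with h2 | h2 <;>
      simp [h1, h2]

variable [Fintype V] [DecidableEq V]

lemma exists_proper_of_pos [DecidableRel G.Adj] {v0 : V} (W : G.Walk v0 v0)
    (hW : W.IsHamiltonianCycle) (hreg : ∀ v : V, G.degree v = 3)
    (σ : Sym2 V → ℤ) (hσ : ∀ e ∈ W.edges, σ e = 1 ∨ σ e = -1)
    (hpos : (W.edges.map σ).prod = 1) :
    ∃ c : SColoring G σ 3, c.Proper := by
  classical
  obtain ⟨L, hL⟩ : ∃ L, W.length = L := ⟨_, rfl⟩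
  have hEL : W.edges.length = L := by rw [W.length_edges, hL]
  have hL3 : 3 ≤ L := hL ▸ hW.isCycle.three_le_length
  have hnil : ¬ W.Nil := hW.isCycle.not_nil
  -- prefix products
  set x : ℕ → ℤ := fun i => ((W.edges.take i).map σ).prod with hxdef
  have hx : ∀ i, x i = 1 ∨ x i = -1 := by
    intro i
    refine prod_pm _ ?_
    intro a ha
    simp only [List.mem_map] at ha
    obtain ⟨e, he, rfl⟩ := ha
    exact hσ e (List.take_subset _ _ he)
  have hxne : ∀ i, x i ≠ 0 := by intro i; rcases hx i with h | h <;> simp [h]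
  have hx0 : x 0 = 1 := by simp [hxdef]
  have hxL : x L = 1 := by
    have : W.edges.take L = W.edges := by rw [← hEL]; exact List.take_length
    simp only [hxdef, this]; exact hpos
  have hxsucc : ∀ (i : ℕ) (hi : i < L), x (i + 1) = x i * σ (W.edges[i]'(by omega)) := by
    intro i hi
    simp only [hxdef]
    rw [List.take_succ, List.getElem?_eq_getElem (by omega), List.map_append, List.prod_append]
    simp
  -- support tail facts
  have htN : W.support.tail.Nodup := by
    rw [List.nodup_iff_count_le_one]
    intro a
    have := hW.isHamiltonian_tail a
    rw [Walk.support_tail_of_not_nil W hnil] at this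
    omega
  have htmem : ∀ v : V, v ∈ W.support.tail := by
    intro v
    have := hW.isHamiltonian_tail.mem_support v
    rwa [Walk.support_tail_of_not_nil W hnil] at this
  have htlen : W.support.tail.length = L := by
    rw [List.length_tail, W.length_support, hL]
    omega
  have hgetTail : ∀ (i : ℕ) (hi : i < L), W.support.tail[i]'(by omega) = W.getVert (i+1) := by
    intro i hi
    rw [List.getElem_tail]
    exact myWalk_getElem_support W (i+1) (by rw [W.length_support]; omega)
  -- injectivity of getVert on [1, L]
  have inj : ∀ i1 i2 : ℕ, 1 ≤ i1 → i1 ≤ L → 1 ≤ i2 → i2 ≤ L →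
      W.getVert i1 = W.getVert i2 → i1 = i2 := by
    intro i1 i2 h1 h1' h2 h2' heq
    have hi1 : i1 - 1 < W.support.tail.length := by omega
    have hi2 : i2 - 1 < W.support.tail.length := by omega
    have e1 : W.support.tail[i1-1]'hi1 = W.getVert i1 := by
      rw [hgetTail (i1-1) (by omega)]; congr 1; omega
    have e2 : W.support.tail[i2-1]'hi2 = W.getVert i2 := by
      rw [hgetTail (i2-1) (by omega)]; congr 1; omega
    have h12 : W.support.tail[i1-1]'hi1 = W.support.tail[i2-1]'hi2 := by
      rw [e1, e2, heq]
    have := htN.getElem_inj_iff.mp h12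
    omega
  -- position function
  obtain ⟨j, hj1, hjL, hgj⟩ : ∃ j : V → ℕ, (∀ v, 1 ≤ j v) ∧ (∀ v, j v ≤ L) ∧
      (∀ v, W.getVert (j v) = v) := by
    refine ⟨fun v => W.support.tail.idxOf v + 1, fun v => Nat.le_add_left 1 _, ?_, ?_⟩
    · intro v
      show W.support.tail.idxOf v + 1 ≤ L
      have h : W.support.tail.idxOf v < W.support.tail.length :=
        List.idxOf_lt_length_iff.mpr (htmem v)
      omega
    · intro v
      show W.getVert (W.support.tail.idxOf v + 1) = v
      have h1 : W.support.tail.idxOf v < W.support.tail.length :=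
        List.idxOf_lt_length_iff.mpr (htmem v)
      have h2 := List.getElem_idxOf h1
      rw [hgetTail _ (by omega)] at h2
      exact h2
  have hgL : W.getVert L = v0 := by rw [← hL]; exact W.getVert_length
  have hg0 : W.getVert 0 = v0 := W.getVert_zero
  have hND : W.edges.Nodup := hW.isCycle.edges_nodup
  -- the coloring
  set col : V → Sym2 V → ℤ := fun u e =>
    if he : e ∈ W.edges then
      (if u = W.getVert (W.edges.idxOf e) then x (W.edges.idxOf e)
       else -x (W.edges.idxOf e + 1))
    else 0 with hcoldef
  -- edge decomposition fact
  have edge_fact : ∀ (v w : V), G.Adj v w → s(v, w) ∈ W.edges →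
      (v = W.getVert (W.edges.idxOf s(v, w)) ∧
        w = W.getVert (W.edges.idxOf s(v, w) + 1)) ∨
      (v = W.getVert (W.edges.idxOf s(v, w) + 1) ∧
        w = W.getVert (W.edges.idxOf s(v, w))) := by
    intro v w hadj he
    have hi : W.edges.idxOf s(v, w) < W.edges.length := List.idxOf_lt_length_iff.mpr he
    have := myWalk_getElem_edges W _ hi
    rw [List.getElem_idxOf hi] at this
    rw [Sym2.eq_iff] at this
    tauto
  have hgne : ∀ i : ℕ, i < L → W.getVert i ≠ W.getVert (i + 1) := by
    intro i hi
    exact (W.adj_getVert_succ (by omega)).ne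
  -- values of col on cycle edges
  have colv : ∀ (v w : V), G.Adj v w → s(v, w) ∈ W.edges →
      (col v s(v, w) = x (W.edges.idxOf s(v, w)) ∧
        v = W.getVert (W.edges.idxOf s(v, w))) ∨
      (col v s(v, w) = -x (W.edges.idxOf s(v, w) + 1) ∧
        v = W.getVert (W.edges.idxOf s(v, w) + 1)) := by
    intro v w hadj he
    have hi : W.edges.idxOf s(v, w) < L := by
      have := List.idxOf_lt_length_iff.mpr he; omega
    rcases edge_fact v w hadj he with ⟨hv, hw⟩ | ⟨hv, hw⟩
    · left; constructor
      · simp only [hcoldef]; rw [dif_pos he, if_pos hv]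
      · exact hv
    · right; refine ⟨?_, hv⟩
      have hvne : v ≠ W.getVert (W.edges.idxOf s(v, w)) :=
        fun h => (hgne _ hi) (h.symm.trans hv)
      simp only [hcoldef]; rw [dif_pos he, if_neg hvne]
  -- the coloring structure
  refine ⟨⟨col, ?_, ?_⟩, ?_⟩
  · -- mem_colors
    intro v w hadj
    have : col v s(v, w) = 0 ∨ col v s(v, w) = 1 ∨ col v s(v, w) = -1 := by
      by_cases he : s(v, w) ∈ W.edges
      · rcases colv v w hadj he with ⟨hc, _⟩ | ⟨hc, _⟩ <;> rw [hc]
        · rcases hx (W.edges.idxOf s(v, w)) with h | h <;> simp [h]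
        · rcases hx (W.edges.idxOf s(v, w) + 1) with h | h <;> simp [h]
      · left; simp only [hcoldef]; rw [dif_neg he]
    rcases this with h | h | h <;> rw [h] <;>
      exact ⟨by norm_num, fun _ => ⟨1, by norm_num⟩⟩
  · -- compat
    intro v w hadj
    by_cases he : s(v, w) ∈ W.edges
    · have hi : W.edges.idxOf s(v, w) < L := by
        have := List.idxOf_lt_length_iff.mpr he; omega
      have hstep : x (W.edges.idxOf s(v, w) + 1) =
          x (W.edges.idxOf s(v, w)) * σ s(v, w) := by
        rw [hxsucc _ hi]
        congr 2
        exact List.getElem_idxOf (by omega)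
      have hσ2 : σ s(v, w) * σ s(v, w) = 1 := by
        rcases hσ _ he with h | h <;> rw [h] <;> norm_num
      have hsymmadj : G.Adj w v := hadj.symm
      have hswap : s(w, v) = s(v, w) := Sym2.eq_swap
      rcases edge_fact v w hadj he with ⟨hv, hw⟩ | ⟨hv, hw⟩
      · have hvc : col v s(v, w) = x (W.edges.idxOf s(v, w)) := by
          simp only [hcoldef]; rw [dif_pos he, if_pos hv]
        have hwne : w ≠ W.getVert (W.edges.idxOf s(v, w)) :=
          fun h => (hgne _ hi) (h.symm.trans hw)
        have hwc : col w s(v, w) = -x (W.edges.idxOf s(v, w) + 1) := by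
          simp only [hcoldef]; rw [dif_pos he, if_neg hwne]
        rw [hvc, hwc, hstep]
        linear_combination (-(x (W.edges.idxOf s(v, w)))) * hσ2
      · have hvne : v ≠ W.getVert (W.edges.idxOf s(v, w)) :=
          fun h => (hgne _ hi) (h.symm.trans hv)
        have hvc : col v s(v, w) = -x (W.edges.idxOf s(v, w) + 1) := by
          simp only [hcoldef]; rw [dif_pos he, if_neg hvne]
        have hwc : col w s(v, w) = x (W.edges.idxOf s(v, w)) := by
          simp only [hcoldef]; rw [dif_pos he, if_pos hw]
        rw [hvc, hwc, hstep]
        ring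
    · simp only [hcoldef]
      rw [dif_neg he, dif_neg he]
      ring
  · -- Proper
    intro v w y hw hy hwy
    show col v s(v, w) ≠ col v s(v, y)
    have hene : s(v, w) ≠ s(v, y) := by
      intro h
      rw [Sym2.eq_iff] at h
      rcases h with ⟨-, h⟩ | ⟨h1, h2⟩
      · exact hwy h
      · exact hwy (h2.trans h1)
    -- classification of col values at v
    have classify : ∀ z : V, G.Adj v z → s(v, z) ∈ W.edges →
        (col v s(v, z) = x (j v) ∧
          (W.edges.idxOf s(v, z) = j v ∨ (W.edges.idxOf s(v, z) = 0 ∧ j v = L))) ∨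
        (col v s(v, z) = -x (j v) ∧ W.edges.idxOf s(v, z) + 1 = j v) := by
      intro z hz he
      have hi : W.edges.idxOf s(v, z) < L := by
        have := List.idxOf_lt_length_iff.mpr he; omega
      rcases colv v z hz he with ⟨hc, hv⟩ | ⟨hc, hv⟩
      · left
        by_cases h0 : W.edges.idxOf s(v, z) = 0
        · have hvv : v = v0 := by rw [hv, h0, hg0]
          have hjv : j v = L := by
            apply inj _ _ (hj1 v) (hjL v) (by omega) le_rfl
            rw [hgj, hgL, hvv]
          refine ⟨?_, Or.inr ⟨h0, hjv⟩⟩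
          rw [hc, h0, hx0, hjv, hxL]
        · have hjv : j v = W.edges.idxOf s(v, z) := by
            apply inj _ _ (hj1 v) (hjL v) (by omega) (by omega)
            rw [hgj, ← hv]
          rw [hjv]; exact ⟨hc, Or.inl rfl⟩
      · right
        have hjv : j v = W.edges.idxOf s(v, z) + 1 := by
          apply inj _ _ (hj1 v) (hjL v) (by omega) (by omega)
          rw [hgj, ← hv]
        rw [hjv]; exact ⟨hc, rfl⟩
    -- two cycle edges incident to v with distinct endpoints
    have two_nbrs : ∃ a b : V, a ≠ b ∧ G.Adj v a ∧ G.Adj v b ∧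
        s(v, a) ∈ W.edges ∧ s(v, b) ∈ W.edges := by
      by_cases hjv : j v = L
      · -- v = v0
        have hvv : v = v0 := by rw [← hgj v, hjv, hgL]
        refine ⟨W.getVert 1, W.getVert (L - 1), ?_, ?_, ?_, ?_, ?_⟩
        · intro h
          have := inj 1 (L - 1) le_rfl (by omega) (by omega) (by omega) h
          omega
        · have h' := W.adj_getVert_succ (i := 0) (by omega)
          rw [hg0] at h'
          rw [hvv]
          simpa using h'
        · have h' := W.adj_getVert_succ (i := L - 1) (by omega)
          rw [show L - 1 + 1 = L by omega, hgL] at h'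
          rw [hvv]
          exact h'.symm
        · have h0 : (0:ℕ) < W.edges.length := by omega
          have hmem := List.getElem_mem h0
          rw [myWalk_getElem_edges W 0 h0, hg0] at hmem
          rw [hvv]
          simpa using hmem
        · have h0 : L - 1 < W.edges.length := by omega
          have hmem := List.getElem_mem h0
          rw [myWalk_getElem_edges W (L-1) h0, show L - 1 + 1 = L by omega, hgL] at hmem
          rw [hvv, Sym2.eq_swap]
          exact hmem
      · have hjv' : j v < L := lt_of_le_of_ne (hjL v) hjv
        have b1 := hj1 v
        refine ⟨W.getVert (j v + 1), W.getVert (j v - 1), ?_, ?_, ?_, ?_, ?_⟩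
        · intro h
          by_cases h1 : j v = 1
          · rw [h1] at h
            have : W.getVert (1 - 1) = W.getVert L := by
              show W.getVert 0 = W.getVert L
              rw [hg0, hgL]
            rw [this] at h
            have := inj 2 L (by omega) (by omega) (by omega) le_rfl h
            omega
          · have := inj (j v + 1) (j v - 1) (by omega) (by omega) (by omega) (by omega) h
            omega
        · have := W.adj_getVert_succ (i := j v) (by omega)
          rwa [hgj] at this
        · have := W.adj_getVert_succ (i := j v - 1) (by omega)
          rw [show j v - 1 + 1 = j v by omega, hgj] at this
          exact this.symm
        · have h0 : j v < W.edges.length := by omega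
          have hmem := List.getElem_mem h0
          rw [myWalk_getElem_edges W (j v) h0, hgj] at hmem
          exact hmem
        · have h0 : j v - 1 < W.edges.length := by omega
          have hmem := List.getElem_mem h0
          rw [myWalk_getElem_edges W (j v - 1) h0, show j v - 1 + 1 = j v by omega, hgj] at hmem
          rw [Sym2.eq_swap]
          exact hmem
    by_cases he1 : s(v, w) ∈ W.edges <;> by_cases he2 : s(v, y) ∈ W.edges
    · -- both on cycle
      have hidx : W.edges.idxOf s(v, w) ≠ W.edges.idxOf s(v, y) := by
        intro h
        apply hene
        have h1 : W.edges.idxOf s(v, w) < W.edges.length := List.idxOf_lt_length_iff.mpr he1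
        have h2 : W.edges.idxOf s(v, y) < W.edges.length := List.idxOf_lt_length_iff.mpr he2
        rw [← List.getElem_idxOf h1, ← List.getElem_idxOf h2]
        simp_rw [h]
      have hiw : W.edges.idxOf s(v, w) < L := by
        have := List.idxOf_lt_length_iff.mpr he1; omega
      have hiy : W.edges.idxOf s(v, y) < L := by
        have := List.idxOf_lt_length_iff.mpr he2; omega
      rcases classify w hw he1 with ⟨hc1, hp1⟩ | ⟨hc1, hp1⟩ <;>
        rcases classify y hy he2 with ⟨hc2, hp2⟩ | ⟨hc2, hp2⟩
      · exfalso; rcases hp1 with h1 | ⟨h1, h1'⟩ <;> rcases hp2 with h2 | ⟨h2, h2'⟩ <;> omega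
      · rw [hc1, hc2]
        intro h
        exact hxne (j v) (by linarith)
      · rw [hc1, hc2]
        intro h
        exact hxne (j v) (by linarith)
      · exfalso; omega
    · -- w on cycle, y off
      have hc2 : col v s(v, y) = 0 := by simp only [hcoldef]; rw [dif_neg he2]
      rcases classify w hw he1 with ⟨hc1, -⟩ | ⟨hc1, -⟩ <;> rw [hc1, hc2]
      · exact hxne (j v)
      · simpa using hxne (j v)
    · have hc1 : col v s(v, w) = 0 := by simp only [hcoldef]; rw [dif_neg he1]
      rcases classify y hy he2 with ⟨hc2, -⟩ | ⟨hc2, -⟩ <;> rw [hc1, hc2]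
      · exact fun h => hxne (j v) h.symm
      · intro h; exact hxne (j v) (by linarith)
    · -- both off cycle: contradiction with degree 3
      exfalso
      obtain ⟨a, b, hab, hva, hvb, hea, heb⟩ := two_nbrs
      have hwa : w ≠ a := fun h => he1 (h ▸ hea)
      have hwb : w ≠ b := fun h => he1 (h ▸ heb)
      have hya : y ≠ a := fun h => he2 (h ▸ hea)
      have hyb : y ≠ b := fun h => he2 (h ▸ heb)
      have hsub : ({w, y, a, b} : Finset V) ⊆ G.neighborFinset v := by
        intro z hz
        simp only [Finset.mem_insert, Finset.mem_singleton] at hz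
        rw [SimpleGraph.mem_neighborFinset]
        rcases hz with rfl | rfl | rfl | rfl <;> assumption
      have hcard : ({w, y, a, b} : Finset V).card = 4 := by
        rw [Finset.card_insert_of_notMem (by simp [hwy, hwa, hwb]),
          Finset.card_insert_of_notMem (by simp [hya, hyb]),
          Finset.card_insert_of_notMem (by simp [hab]),
          Finset.card_singleton]
      have := Finset.card_le_card hsub
      rw [hcard, G.card_neighborFinset_eq_degree, hreg v] at this
      omega

end Aux

/-- For a Hamiltonian connected isthmus-free `3`-regular graph `Γ` with `m` edges, at
least `2^(m-1)` of the `2^m` signatures (here encoded as functions `E(Γ) → Bool`, with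
`true ↦ +1` and `false ↦ -1`) yield a properly `3`-edge colorable signed graph. -/
theorem hamiltonian_cubic_class_ratio {V : Type*} [Fintype V] [DecidableEq V]
    (G : SimpleGraph V) [DecidableRel G.Adj]
    (hconn : G.Connected) (hreg : ∀ v : V, G.degree v = 3)
    (hbridge : ∀ e ∈ G.edgeSet, ¬G.IsBridge e)
    (hham : ∃ (v : V) (W : G.Walk v v), W.IsHamiltonianCycle) :
    2 ^ (G.edgeFinset.card - 1) ≤
      {s : G.edgeSet → Bool | ∃ σ : Sym2 V → ℤ,
        (∀ e : G.edgeSet, σ e.1 = if s e then 1 else -1) ∧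
        ∃ c : SColoring G σ 3, c.Proper}.ncard := by
  classical
  obtain ⟨v0, W, hW⟩ := hham
  set T : Set (G.edgeSet → Bool) := {s : G.edgeSet → Bool | ∃ σ : Sym2 V → ℤ,
        (∀ e : G.edgeSet, σ e.1 = if s e then 1 else -1) ∧
        ∃ c : SColoring G σ 3, c.Proper} with hT
  set F : (G.edgeSet → Bool) → (Sym2 V → ℤ) :=
    fun s e => if h : e ∈ G.edgeSet then (if s ⟨e, h⟩ then 1 else -1) else 1 with hF
  have hFcond : ∀ (s : G.edgeSet → Bool) (e : G.edgeSet), F s e.1 = if s e then 1 else -1 := by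
    intro s e
    simp only [hF, dif_pos e.2]
  have hFpm : ∀ s, ∀ e ∈ W.edges, F s e = 1 ∨ F s e = -1 := by
    intro s e he
    have h2 : e ∈ G.edgeSet := W.edges_subset_edgeSet he
    simp only [hF, dif_pos h2]
    by_cases h : s ⟨e, h2⟩ <;> simp [h]
  set P : (G.edgeSet → Bool) → ℤ := fun s => (W.edges.map (F s)).prod with hP
  have hPpm : ∀ s, P s = 1 ∨ P s = -1 := by
    intro s
    refine prod_pm _ ?_
    intro a ha
    simp only [List.mem_map] at ha
    obtain ⟨e, he, rfl⟩ := ha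
    exact hFpm s e he
  set S : Set (G.edgeSet → Bool) := {s | P s = 1} with hS
  have hST : S ⊆ T := by
    intro s hs
    exact ⟨F s, hFcond s, exists_proper_of_pos W hW hreg (F s) (hFpm s) hs⟩
  -- the distinguished edge
  have hL3 : 3 ≤ W.edges.length := by
    rw [W.length_edges]; exact hW.isCycle.three_le_length
  obtain ⟨e0, es, hE⟩ : ∃ e0 es, W.edges = e0 :: es := by
    cases h : W.edges with
    | nil => rw [h] at hL3; simp at hL3
    | cons a l => exact ⟨a, l, rfl⟩
  have he0 : e0 ∈ G.edgeSet := W.edges_subset_edgeSet (by rw [hE]; simp)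
  have hND : W.edges.Nodup := hW.isCycle.edges_nodup
  have he0es : e0 ∉ es := by
    rw [hE] at hND
    exact (List.nodup_cons.mp hND).1
  set E0 : G.edgeSet := ⟨e0, he0⟩ with hE0
  set flip : (G.edgeSet → Bool) → (G.edgeSet → Bool) :=
    fun s e => if e = E0 then !(s e) else s e with hflip
  have hflipinv : Function.Involutive flip := by
    intro s
    funext e
    simp only [hflip]
    by_cases h : e = E0 <;> simp [h]
  have hkey : ∀ s, P (flip s) = -(P s) := by
    intro s
    simp only [hP, hE, List.map_cons, List.prod_cons]
    have h1 : F (flip s) e0 = -(F s e0) := by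
      simp only [hF, dif_pos he0, hflip]
      by_cases h : s ⟨e0, he0⟩ <;> simp [h, hE0]
    have h2 : es.map (F (flip s)) = es.map (F s) := by
      refine List.map_congr_left ?_
      intro e he
      have hee : e ∈ G.edgeSet := W.edges_subset_edgeSet (by rw [hE]; simp [he])
      have hne : (⟨e, hee⟩ : G.edgeSet) ≠ E0 := by
        intro h
        apply he0es
        have : e = e0 := congrArg Subtype.val h
        rwa [← this]
      simp only [hF, dif_pos hee, hflip]
      simp only [if_neg hne]
    rw [h1, h2]
    ring
  have hffS : flip '' S = Sᶜ := by
    ext s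
    simp only [Set.mem_image, Set.mem_compl_iff, hS, Set.mem_setOf_eq]
    constructor
    · rintro ⟨t, ht, rfl⟩
      rw [hkey t, ht]
      norm_num
    · intro hs
      refine ⟨flip s, ?_, hflipinv s⟩
      rw [hkey s]
      rcases hPpm s with h | h
      · exact absurd h hs
      · rw [h]; norm_num
  have hcardeq : S.ncard = Sᶜ.ncard := by
    rw [← hffS]
    exact (Set.ncard_image_of_injective S hflipinv.injective).symm
  have hsum : S.ncard + Sᶜ.ncard = Nat.card (G.edgeSet → Bool) :=
    Set.ncard_add_ncard_compl S
  have hm : G.edgeFinset.card = Fintype.card G.edgeSet := Set.toFinset_card _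
  have hm1 : 1 ≤ Fintype.card G.edgeSet := Fintype.card_pos_iff.mpr ⟨E0⟩
  have hcard : Nat.card (G.edgeSet → Bool) = 2 ^ Fintype.card G.edgeSet := by
    rw [Nat.card_eq_fintype_card, Fintype.card_fun, Fintype.card_bool]
  have hpow : 2 ^ Fintype.card G.edgeSet = 2 * 2 ^ (Fintype.card G.edgeSet - 1) := by
    rw [← pow_succ']
    congr 1
    omega
  have hScard : S.ncard = 2 ^ (Fintype.card G.edgeSet - 1) := by omega
  calc 2 ^ (G.edgeFinset.card - 1) = S.ncard := by rw [hScard, hm]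
    _ ≤ T.ncard := Set.ncard_le_ncard hST (Set.toFinite T)
end

section
/- Let n ≥ 3 be odd and let σ be a signature on the complete graph K_n such that the number of negative edges (edges e with σ(e) = −1) is odd. Then the signed graph (K_n, σ) does not admit a proper (n−1)-edge coloring; that is, it cannot be edge colored with Δ(K_n) = n−1 colors. (Consequently at most half of all signatures on K_n are Δ-colorable.) -/
open SimpleGraph

section Aux

open Finset

private lemma Icc_neg_prod' (k : ℕ) : ∏ a ∈ Finset.Icc (-(k:ℤ)) (-1), a
    = (-1)^k * ∏ a ∈ Finset.Icc (1:ℤ) k, a := by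
  have himg : Finset.Icc (-(k:ℤ)) (-1) = (Finset.Icc (1:ℤ) k).image (fun a => -a) := by
    ext a
    simp only [Finset.mem_Icc, Finset.mem_image]
    constructor
    · rintro ⟨h1, h2⟩; exact ⟨-a, ⟨by omega, by omega⟩, by ring⟩
    · rintro ⟨b, ⟨h1, h2⟩, rfl⟩; omega
  rw [himg, Finset.prod_image (fun x _ y _ h => neg_injective h)]
  have : ∏ a ∈ Finset.Icc (1:ℤ) k, (fun a => -a) a
      = (-1)^(Finset.Icc (1:ℤ) k).card * ∏ a ∈ Finset.Icc (1:ℤ) k, a := by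
    rw [← Finset.prod_const, ← Finset.prod_mul_distrib]
    exact Finset.prod_congr rfl (fun x _ => (neg_one_mul x).symm)
  rw [this]
  congr 2
  rw [Int.card_Icc]; omega

private lemma prodS' (k : ℕ) : ∃ F : ℤ, 0 < F ∧
    ∏ a ∈ (Finset.Icc (-(k:ℤ)) k).erase 0, a = (-1)^k * F := by
  refine ⟨(∏ a ∈ Finset.Icc (1:ℤ) k, a)^2, ?_, ?_⟩
  · have : 0 < ∏ a ∈ Finset.Icc (1:ℤ) k, a :=
      Finset.prod_pos (fun a ha => by simp only [Finset.mem_Icc] at ha; omega)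
    positivity
  · have hsplit : (Finset.Icc (-(k:ℤ)) k).erase 0
        = Finset.Icc (-(k:ℤ)) (-1) ∪ Finset.Icc 1 k := by
      ext a
      simp only [Finset.mem_erase, Finset.mem_Icc, Finset.mem_union]
      omega
    have hdisj : Disjoint (Finset.Icc (-(k:ℤ)) (-1)) (Finset.Icc 1 k) := by
      rw [Finset.disjoint_left]
      intro a ha hb
      simp only [Finset.mem_Icc] at ha hb
      omega
    rw [hsplit, Finset.prod_union hdisj, Icc_neg_prod']
    ring

end Aux

/-- If `n ≥ 3` is odd and the signature `σ` on the complete graph `K n` has an odd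
number of negative edges, then `(K n, σ)` admits no proper `(n-1)`-edge coloring. -/
theorem Kn_odd_negative_not_deltaColorable (n : ℕ) (hn : Odd n) (hn3 : 3 ≤ n)
    (σ : Sym2 (Fin n) → ℤ)
    (hσ : ∀ e ∈ (⊤ : SimpleGraph (Fin n)).edgeSet, σ e = 1 ∨ σ e = -1)
    (hodd : Odd {e : Sym2 (Fin n) |
      e ∈ (⊤ : SimpleGraph (Fin n)).edgeSet ∧ σ e = -1}.ncard) :
    ¬∃ c : SColoring (⊤ : SimpleGraph (Fin n)) σ (n - 1), c.Proper := by
  classical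
  rintro ⟨c, hc⟩
  obtain ⟨k, hkn⟩ := hn
  have hk1 : 1 ≤ k := by omega
  set S : Finset ℤ := (Finset.Icc (-(k:ℤ)) k).erase 0 with hSdef
  set f : Fin n → Fin n → ℤ := fun v w => c.col v s(v, w) with hfdef
  have hadj : ∀ {v w : Fin n}, v ≠ w → (⊤ : SimpleGraph (Fin n)).Adj v w :=
    fun h => (SimpleGraph.top_adj _ _).2 h
  -- membership of colors in S
  have hmem : ∀ v w : Fin n, v ≠ w → f v w ∈ S := by
    intro v w hvw
    have h := c.mem_colors (hadj hvw)
    simp only [Mset, Set.mem_setOf_eq] at h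
    obtain ⟨h1, h2⟩ : 2 * (f v w).natAbs ≤ n - 1 ∧ (f v w = 0 → Odd (n - 1)) := h
    have hz : f v w ≠ 0 := by
      intro h0
      obtain ⟨j, hj⟩ := h2 h0
      omega
    simp only [hSdef, Finset.mem_erase, Finset.mem_Icc]
    refine ⟨hz, by omega, by omega⟩
  have hfne : ∀ v w : Fin n, v ≠ w → f v w ≠ 0 := by
    intro v w hvw
    have := hmem v w hvw
    simp only [hSdef, Finset.mem_erase] at this
    exact this.1
  have hswap : ∀ v w : Fin n, f w v = c.col w s(v, w) := by
    intro v w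
    show c.col w s(w, v) = c.col w s(v, w)
    rw [Sym2.eq_swap]
  have hcomp : ∀ v w : Fin n, v ≠ w → f v w * f w v = -σ s(v, w) * (f w v)^2 := by
    intro v w hvw
    have h := c.compat (hadj hvw)
    have h2 : f v w = -σ s(v, w) * f w v := by rw [hswap v w]; exact h
    rw [h2]; ring
  -- the product of all colors
  obtain ⟨F, hF, hCval⟩ := prodS' k
  set C : ℤ := ∏ a ∈ S, a with hCdef
  -- cardinality facts
  have hScard : S.card = 2 * k := by
    rw [hSdef, Finset.card_erase_of_mem (by simp only [Finset.mem_Icc]; omega),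
      Int.card_Icc]
    omega
  -- vertex products
  have hvert : ∀ v : Fin n, ∏ w ∈ Finset.univ.erase v, f v w = C := by
    intro v
    have hinj : ∀ x ∈ Finset.univ.erase v, ∀ y ∈ Finset.univ.erase v,
        f v x = f v y → x = y := by
      intro x hx y hy hxy
      by_contra hne
      exact hc (hadj (Finset.ne_of_mem_erase hx).symm)
        (hadj (Finset.ne_of_mem_erase hy).symm) hne hxy
    have himage : (Finset.univ.erase v).image (f v) = S := by
      apply Finset.eq_of_subset_of_card_le
      · intro a ha
        obtain ⟨w, hw, rfl⟩ := Finset.mem_image.1 ha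
        exact hmem v w (Finset.ne_of_mem_erase hw).symm
      · rw [Finset.card_image_of_injOn (fun x hx y hy => hinj x hx y hy), hScard,
          Finset.card_erase_of_mem (Finset.mem_univ v), Finset.card_univ,
          Fintype.card_fin]
        omega
    calc ∏ w ∈ Finset.univ.erase v, f v w
        = ∏ a ∈ (Finset.univ.erase v).image (f v), a := (Finset.prod_image (f := fun a : ℤ => a) hinj).symm
      _ = C := by rw [himage]
  have hP1 : ∏ v : Fin n, ∏ w ∈ Finset.univ.erase v, f v w = C ^ n := by
    rw [Finset.prod_congr rfl (fun v _ => hvert v), Finset.prod_const,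
      Finset.card_univ, Fintype.card_fin]
  -- the edge set as ordered pairs
  set E : Finset (Fin n × Fin n) :=
    (Finset.univ ×ˢ Finset.univ).filter (fun p => p.1 < p.2) with hEdef
  have hEne : ∀ p ∈ E, p.1 ≠ p.2 := by
    intro p hp
    exact ne_of_lt (Finset.mem_filter.1 hp).2
  -- rewrite the double product as a product over E
  set D : Finset (Fin n × Fin n) :=
    (Finset.univ ×ˢ Finset.univ).filter (fun p => p.1 ≠ p.2) with hDdef
  have hP2 : ∏ v : Fin n, ∏ w ∈ Finset.univ.erase v, f v w
      = ∏ p ∈ E, (f p.1 p.2 * f p.2 p.1) := by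
    have step1 : ∏ p ∈ D, f p.1 p.2
        = ∏ v : Fin n, ∏ w ∈ Finset.univ.erase v, f v w := by
      have e1 : ∏ p ∈ (Finset.univ ×ˢ Finset.univ : Finset (Fin n × Fin n)),
          (if p.1 ≠ p.2 then f p.1 p.2 else 1)
          = ∏ v : Fin n, ∏ w : Fin n, (if v ≠ w then f v w else 1) :=
        Finset.prod_product' Finset.univ Finset.univ
          (fun v w => if v ≠ w then f v w else 1)
      rw [hDdef, Finset.prod_filter, e1]
      refine Finset.prod_congr rfl (fun v _ => ?_)
      rw [← Finset.filter_ne' Finset.univ v, Finset.prod_filter]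
      refine Finset.prod_congr rfl (fun w _ => ?_)
      by_cases h : v = w <;> simp [h, eq_comm]
    have hDE : D.filter (fun p => p.1 < p.2) = E := by
      ext p
      simp only [hDdef, hEdef, Finset.mem_filter]
      constructor
      · rintro ⟨⟨h1, _⟩, h3⟩; exact ⟨h1, h3⟩
      · rintro ⟨h1, h3⟩; exact ⟨⟨h1, ne_of_lt h3⟩, h3⟩
    have hDE' : D.filter (fun p => ¬ p.1 < p.2)
        = (Finset.univ ×ˢ Finset.univ).filter (fun p => p.2 < p.1) := by
      ext p
      simp only [hDdef, Finset.mem_filter, not_lt]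
      constructor
      · rintro ⟨⟨h1, h2⟩, h3⟩; exact ⟨h1, lt_of_le_of_ne h3 (Ne.symm h2)⟩
      · rintro ⟨h1, h3⟩; exact ⟨⟨h1, (ne_of_lt h3).symm⟩, le_of_lt h3⟩
    have hswapprod : ∏ p ∈ (Finset.univ ×ˢ Finset.univ).filter
          (fun p : Fin n × Fin n => p.2 < p.1), f p.1 p.2
        = ∏ p ∈ E, f p.2 p.1 := by
      refine Finset.prod_nbij' Prod.swap Prod.swap ?_ ?_ ?_ ?_ ?_
      · intro p hp
        simp only [hEdef, Finset.mem_filter] at hp ⊢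
        exact ⟨by simp, hp.2⟩
      · intro p hp
        simp only [hEdef, Finset.mem_filter] at hp ⊢
        exact ⟨by simp, hp.2⟩
      · intro p _; rfl
      · intro p _; rfl
      · intro p _; rfl
    rw [← step1, ← Finset.prod_filter_mul_prod_filter_not D (fun p => p.1 < p.2),
      hDE, hDE', hswapprod, ← Finset.prod_mul_distrib]
  -- split off the signs
  set Q : ℤ := ∏ p ∈ E, (f p.2 p.1)^2 with hQdef
  have hQ : 0 < Q := by
    refine Finset.prod_pos (fun p hp => ?_)
    exact pow_two_pos_of_ne_zero (hfne p.2 p.1 (hEne p hp).symm)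
  have hP3 : ∏ p ∈ E, (f p.1 p.2 * f p.2 p.1)
      = (∏ p ∈ E, -σ s(p.1, p.2)) * Q := by
    rw [hQdef, ← Finset.prod_mul_distrib]
    exact Finset.prod_congr rfl (fun p hp => hcomp p.1 p.2 (hEne p hp))
  -- count negative edges
  set m : ℕ := (E.filter (fun p => σ s(p.1, p.2) = -1)).card with hmdef
  have hedge : ∀ p ∈ E, s(p.1, p.2) ∈ (⊤ : SimpleGraph (Fin n)).edgeSet := by
    intro p hp
    exact (SimpleGraph.mem_edgeSet _).2 (hadj (hEne p hp))
  have hsig : ∏ p ∈ E, -σ s(p.1, p.2) = (-1)^(E.card - m) := by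
    rw [← Finset.prod_filter_mul_prod_filter_not E (fun p => σ s(p.1, p.2) = -1)]
    have h1 : ∏ p ∈ E.filter (fun p => σ s(p.1, p.2) = -1), -σ s(p.1, p.2) = 1 := by
      refine Finset.prod_eq_one (fun p hp => ?_)
      rw [(Finset.mem_filter.1 hp).2]
      ring
    have h2 : ∏ p ∈ E.filter (fun p => ¬ σ s(p.1, p.2) = -1), -σ s(p.1, p.2)
        = (-1)^(E.card - m) := by
      have hone : ∀ p ∈ E.filter (fun p => ¬ σ s(p.1, p.2) = -1),
          -σ s(p.1, p.2) = -1 := by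
        intro p hp
        obtain ⟨hpE, hps⟩ := Finset.mem_filter.1 hp
        rcases hσ s(p.1, p.2) (hedge p hpE) with h | h
        · rw [h]
        · exact absurd h hps
      rw [Finset.prod_congr rfl hone, Finset.prod_const]
      congr 1
      have := Finset.card_filter_add_card_filter_not
        (s := E) (p := fun p => σ s(p.1, p.2) = -1)
      omega
    rw [h1, h2, one_mul]
  -- cardinality of E
  have hDcard : D.card = n * n - n := by
    have : D = Finset.univ.offDiag := by
      ext p
      simp only [hDdef, Finset.mem_filter, Finset.mem_offDiag, Finset.mem_product]
      constructor
      · rintro ⟨⟨h1, h2⟩, h3⟩; exact ⟨h1, h2, h3⟩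
      · rintro ⟨h1, h2, h3⟩; exact ⟨⟨h1, h2⟩, h3⟩
    rw [this, Finset.offDiag_card, Finset.card_univ, Fintype.card_fin]
  have h2E : 2 * E.card = n * n - n := by
    have hcards : (D.filter (fun p => ¬ p.1 < p.2)).card = E.card := by
      refine Finset.card_nbij' Prod.swap Prod.swap ?_ ?_ ?_ ?_
      · intro p hp
        simp only [hDdef, hEdef, Finset.mem_coe, Finset.mem_filter, Finset.mem_product, not_lt] at hp ⊢
        refine ⟨⟨by simp, by simp⟩, lt_of_le_of_ne hp.2 (Ne.symm hp.1.2)⟩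
      · intro p hp
        simp only [hDdef, hEdef, Finset.mem_coe, Finset.mem_filter, Finset.mem_product, not_lt] at hp ⊢
        exact ⟨⟨⟨by simp, by simp⟩, (ne_of_lt hp.2).symm⟩, le_of_lt hp.2⟩
      · intro p _; rfl
      · intro p _; rfl
    have hDE : D.filter (fun p => p.1 < p.2) = E := by
      ext p
      simp only [hDdef, hEdef, Finset.mem_filter]
      constructor
      · rintro ⟨⟨h1, _⟩, h3⟩; exact ⟨h1, h3⟩
      · rintro ⟨h1, h3⟩; exact ⟨⟨h1, ne_of_lt h3⟩, h3⟩
    have := Finset.card_filter_add_card_filter_not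
      (s := D) (p := fun p => p.1 < p.2)
    rw [hDE, hcards, hDcard] at this
    omega
  have hnn : n * n = 2 * (k * n) + n := by rw [hkn]; ring
  have hEcard : E.card = k * n := by omega
  -- m is odd
  have hmodd : Odd m := by
    have hset : {e : Sym2 (Fin n) | e ∈ (⊤ : SimpleGraph (Fin n)).edgeSet ∧ σ e = -1}
        = ↑((E.filter (fun p => σ s(p.1, p.2) = -1)).image (fun p => s(p.1, p.2))) := by
      ext e
      induction e using Sym2.ind with
      | _ a b =>
        simp only [Set.mem_setOf_eq, Finset.coe_image, Set.mem_image,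
          Finset.mem_coe, Finset.mem_filter, SimpleGraph.mem_edgeSet,
          SimpleGraph.top_adj]
        constructor
        · rintro ⟨hab, hs⟩
          rcases lt_or_gt_of_ne hab with h | h
          · refine ⟨(a, b), ⟨⟨?_, hs⟩, rfl⟩⟩
            simp only [hEdef, Finset.mem_filter, Finset.mem_product]
            exact ⟨⟨Finset.mem_univ _, Finset.mem_univ _⟩, h⟩
          · refine ⟨(b, a), ⟨⟨?_, ?_⟩, ?_⟩⟩
            · simp only [hEdef, Finset.mem_filter, Finset.mem_product]
              exact ⟨⟨Finset.mem_univ _, Finset.mem_univ _⟩, h⟩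
            · rw [show s(b, a) = s(a, b) from Sym2.eq_swap]; exact hs
            · exact Sym2.eq_swap
        · rintro ⟨p, ⟨hpE, hps⟩, heq⟩
          have hne : p.1 ≠ p.2 := hEne p hpE
          have heq' : s(p.1, p.2) = s(a, b) := heq
          constructor
          · rcases Sym2.eq_iff.1 heq' with ⟨h1, h2⟩ | ⟨h1, h2⟩
            · rw [← h1, ← h2]; exact hne
            · rw [← h1, ← h2]; exact hne.symm
          · rw [← heq']; exact hps
    have hinj2 : Set.InjOn (fun p : Fin n × Fin n => s(p.1, p.2))
        ↑(E.filter (fun p => σ s(p.1, p.2) = -1)) := by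
      intro p hp q hq heq
      simp only [Finset.coe_filter, Set.mem_setOf_eq] at hp hq
      have hp1 : p.1 < p.2 := (Finset.mem_filter.1 hp.1).2
      have hq1 : q.1 < q.2 := (Finset.mem_filter.1 hq.1).2
      simp only [Sym2.eq_iff] at heq
      rcases heq with ⟨h1, h2⟩ | ⟨h1, h2⟩
      · exact Prod.ext h1 h2
      · exfalso
        rw [h1, h2] at hp1
        exact absurd hq1 (asymm hp1)
    rw [hset, Set.ncard_coe_finset, Finset.card_image_of_injOn hinj2] at hodd
    exact hodd
  -- final contradiction
  have hmle : m ≤ E.card := Finset.card_filter_le _ _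
  have hoddsum : Odd (k * n + (E.card - m)) := by
    obtain ⟨t, ht⟩ := hmodd
    exact ⟨k * n - t - 1, by omega⟩
  have key : (-1 : ℤ)^(k * n) * F^n = (-1)^(E.card - m) * Q := by
    have := hP1.symm.trans (hP2.trans (hP3.trans (by rw [hsig])))
    rw [hCval, mul_pow, ← pow_mul] at this
    exact this
  have hcancel : (-1 : ℤ)^(k * n) * ((-1 : ℤ)^(k * n)) = 1 := by
    rw [← pow_add]
    exact Even.neg_one_pow ⟨k * n, rfl⟩
  have hneg : (-1 : ℤ)^(k * n) * ((-1 : ℤ)^(E.card - m)) = -1 := by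
    rw [← pow_add]
    exact Odd.neg_one_pow hoddsum
  have hfinal : F^n = -Q := by
    have h := congrArg (fun x => (-1 : ℤ)^(k * n) * x) key
    rw [← mul_assoc, hcancel, one_mul, ← mul_assoc, hneg, neg_one_mul] at h
    exact h
  have hFn : 0 < F^n := pow_pos hF n
  linarith
end

section
/- Let Σ = (Γ, σ) be a signed simple graph and let τ be an orientation of Σ, i.e., a function τ : I(Γ) → {+1, −1} on the incidences of Γ with σ(e) = −τ(v,e)·τ(w,e) for every edge e with endpoints v and w. Define a signed graph Λ⁻ on vertex set E(Γ) by: distinct edges e, f of Γ are adjacent in Λ⁻ if and only if they share an endpoint in Γ, and the sign of the edge ef of Λ⁻ is τ(v,e)·τ(v,f), where v is the common endpoint of e and f. Then the map sending a proper n-edge coloring γ of Σ to the function c : E(Γ) → M_n given by c(e) = τ(v,e)·γ(v,e) (which is independent of the choice of endpoint v of e) is a bijection between the proper n-edge colorings of Σ and the proper signed vertex n-colorings of Λ⁻. -/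
open SimpleGraph

lemma mset_sign {n : ℕ} {t a : ℤ} (ht : t = 1 ∨ t = -1) (ha : a ∈ Mset n) :
    t * a ∈ Mset n := by
  rcases ht with rfl | rfl
  · simpa using ha
  · obtain ⟨h1, h2⟩ := ha
    exact ⟨by simpa using h1, fun h => h2 (by linarith)⟩

lemma tau_pm {V : Type*} {G : SimpleGraph V} {τ : V → Sym2 V → ℤ}
    (hτ : ∀ ⦃v w : V⦄, G.Adj v w → τ v s(v, w) = 1 ∨ τ v s(v, w) = -1)
    {e : Sym2 V} (he : e ∈ G.edgeSet) {v : V} (hv : v ∈ e) :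
    τ v e = 1 ∨ τ v e = -1 := by
  obtain ⟨w, rfl⟩ := Sym2.mem_iff_exists.mp hv
  exact hτ (G.mem_edgeSet.mp he)

lemma indep_aux {V : Type*} {G : SimpleGraph V} {σ : Sym2 V → ℤ} {τ : V → Sym2 V → ℤ}
    (hτ : ∀ ⦃v w : V⦄, G.Adj v w → τ v s(v, w) = 1 ∨ τ v s(v, w) = -1)
    (hτσ : ∀ ⦃v w : V⦄, G.Adj v w → σ s(v, w) = -(τ v s(v, w) * τ w s(v, w)))
    {γ : Inc G → ℤ}
    (hrel : ∀ ⦃v w : V⦄ (h : G.Adj v w),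
      γ ⟨(v, s(v, w)), G.mem_edgeSet.mpr h, Sym2.mem_mk_left v w⟩ =
        -σ s(v, w) * γ ⟨(w, s(v, w)), G.mem_edgeSet.mpr h, Sym2.mem_mk_right v w⟩) :
    ∀ i j : Inc G, i.1.2 = j.1.2 → τ i.1.1 i.1.2 * γ i = τ j.1.1 j.1.2 * γ j := by
  rintro ⟨⟨v, e⟩, he, hv⟩ ⟨⟨w, e'⟩, he', hw⟩ h
  dsimp only at h
  subst h
  by_cases hvw : v = w
  · subst hvw; rfl
  · have hee : e = s(v, w) := (Sym2.mem_and_mem_iff hvw).mp ⟨hv, hw⟩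
    subst hee
    have hadj : G.Adj v w := G.mem_edgeSet.mp he
    have key : γ (⟨(v, s(v, w)), he, hv⟩ : Inc G)
        = (τ v s(v, w) * τ w s(v, w)) * γ (⟨(w, s(v, w)), he', hw⟩ : Inc G) := by
      have h2 := hrel hadj
      rw [hτσ hadj, neg_neg] at h2
      exact h2
    have h1 := hτ hadj
    have h2 := hτ hadj.symm
    rw [Sym2.eq_swap] at h2
    dsimp only
    rw [key]
    rcases h1 with h1 | h1 <;> rcases h2 with h2 | h2 <;> rw [h1, h2] <;> ring

/-- Given an orientation `τ` of the signed graph `Σ = (G, σ)` and the signed graph `Λ⁻`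
on vertex set `E(G)` (adjacency: sharing an endpoint, with the sign of the edge `ef`
being `τ(v,e)·τ(v,f)` for the common endpoint `v` — the negation of the line graph
of `Σ`), the map `γ ↦ (e ↦ τ(v,e)·γ(v,e))` is a bijection from the proper `n`-edge
colorings of `Σ` onto the proper signed vertex `n`-colorings of `Λ⁻`
(in Zaslavsky's sense). -/
theorem line_graph_coloring_bijection {V : Type*} [Fintype V] (G : SimpleGraph V)
    (σ : Sym2 V → ℤ) (n : ℕ) (τ : V → Sym2 V → ℤ)
    (hτ : ∀ ⦃v w : V⦄, G.Adj v w → τ v s(v, w) = 1 ∨ τ v s(v, w) = -1)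
    (hτσ : ∀ ⦃v w : V⦄, G.Adj v w → σ s(v, w) = -(τ v s(v, w) * τ w s(v, w)))
    (σL : Sym2 G.edgeSet → ℤ)
    (hσL : ∀ (e f : G.edgeSet) (v : V), e ≠ f → v ∈ e.1 → v ∈ f.1 →
      σL s(e, f) = τ v e.1 * τ v f.1) :
    Set.BijOn
      (fun (γ : Inc G → ℤ) (e : G.edgeSet) =>
        τ e.1.out.1 e.1 * γ ⟨(e.1.out.1, e.1), e.2, Sym2.out_fst_mem e.1⟩)
      {γ : Inc G → ℤ | IsEdgeColoringWith G σ (Mset n) γ ∧ IsProperInc G γ}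
      {c : G.edgeSet → ℤ | (∀ e, c e ∈ Mset n) ∧
        ∀ e f : G.edgeSet, e ≠ f → (∃ v : V, v ∈ e.1 ∧ v ∈ f.1) →
          c e ≠ σL s(e, f) * c f} := by
  refine ⟨?_, ?_, ?_⟩
  · -- MapsTo
    rintro γ ⟨⟨hmem, hrel⟩, hprop⟩
    have ind := indep_aux hτ hτσ hrel
    refine ⟨fun e => mset_sign (tau_pm hτ e.2 (Sym2.out_fst_mem e.1)) (hmem _), ?_⟩
    rintro e f hef ⟨v, hve, hvf⟩ hcon
    dsimp only at hcon
    have h1 : τ e.1.out.1 e.1 * γ ⟨(e.1.out.1, e.1), e.2, Sym2.out_fst_mem e.1⟩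
        = τ v e.1 * γ ⟨(v, e.1), e.2, hve⟩ :=
      ind ⟨(e.1.out.1, e.1), e.2, Sym2.out_fst_mem e.1⟩ ⟨(v, e.1), e.2, hve⟩ rfl
    have h2 : τ f.1.out.1 f.1 * γ ⟨(f.1.out.1, f.1), f.2, Sym2.out_fst_mem f.1⟩
        = τ v f.1 * γ ⟨(v, f.1), f.2, hvf⟩ :=
      ind ⟨(f.1.out.1, f.1), f.2, Sym2.out_fst_mem f.1⟩ ⟨(v, f.1), f.2, hvf⟩ rfl
    rw [h1, h2, hσL e f v hef hve hvf] at hcon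
    have hne : γ ⟨(v, e.1), e.2, hve⟩ ≠ γ ⟨(v, f.1), f.2, hvf⟩ :=
      hprop _ _ rfl (fun h => hef (Subtype.ext h))
    rcases tau_pm hτ e.2 hve with he1 | he1 <;> rcases tau_pm hτ f.2 hvf with hf1 | hf1 <;>
      rw [he1, hf1] at hcon <;> apply hne <;> linarith
  · -- InjOn
    rintro γ1 ⟨⟨hm1, hr1⟩, -⟩ γ2 ⟨⟨hm2, hr2⟩, -⟩ h
    have ind1 := indep_aux hτ hτσ hr1
    have ind2 := indep_aux hτ hτσ hr2
    funext i
    obtain ⟨⟨v, e⟩, he, hv⟩ := i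
    have hfun := congrFun h (⟨e, he⟩ : G.edgeSet)
    dsimp only at hfun
    have e1 : τ e.out.1 e * γ1 ⟨(e.out.1, e), he, Sym2.out_fst_mem e⟩
        = τ v e * γ1 ⟨(v, e), he, hv⟩ :=
      ind1 ⟨(e.out.1, e), he, Sym2.out_fst_mem e⟩ ⟨(v, e), he, hv⟩ rfl
    have e2 : τ e.out.1 e * γ2 ⟨(e.out.1, e), he, Sym2.out_fst_mem e⟩
        = τ v e * γ2 ⟨(v, e), he, hv⟩ :=
      ind2 ⟨(e.out.1, e), he, Sym2.out_fst_mem e⟩ ⟨(v, e), he, hv⟩ rfl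
    rw [e1, e2] at hfun
    rcases tau_pm hτ he hv with h1 | h1 <;> rw [h1] at hfun <;> linarith
  · -- SurjOn
    rintro c ⟨hcm, hcp⟩
    refine ⟨fun i => τ i.1.1 i.1.2 * c ⟨i.1.2, i.2.1⟩, ⟨⟨?_, ?_⟩, ?_⟩, ?_⟩
    · exact fun i => mset_sign (tau_pm hτ i.2.1 i.2.2) (hcm _)
    · intro v w hadj
      dsimp only
      rw [hτσ hadj, neg_neg]
      have h2 := hτ hadj.symm
      rw [Sym2.eq_swap] at h2
      rcases hτ hadj with h1 | h1 <;> rcases h2 with h2 | h2 <;> rw [h1, h2] <;> ring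
    · rintro ⟨⟨v, e⟩, he, hv⟩ ⟨⟨w, f⟩, hf, hwf⟩ hvw hne heq
      dsimp only at hvw hne heq
      subst hvw
      have hef : (⟨e, he⟩ : G.edgeSet) ≠ ⟨f, hf⟩ := fun h => hne (congrArg Subtype.val h)
      apply hcp ⟨e, he⟩ ⟨f, hf⟩ hef ⟨v, hv, hwf⟩
      rw [hσL ⟨e, he⟩ ⟨f, hf⟩ v hef hv hwf]
      rcases tau_pm hτ he hv with h1 | h1 <;> rcases tau_pm hτ hf hwf with h2 | h2 <;>
        rw [h1, h2] at heq ⊢ <;> linarith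
    · funext e
      obtain ⟨e, he⟩ := e
      dsimp only
      rcases tau_pm hτ he (Sym2.out_fst_mem e) with h1 | h1 <;> rw [h1] <;> ring
end
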